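/- Every generalized Kracht formula α(x_0) (read as a first-order formula over the frame language via the # translation of its atoms) is the local first-order correspondent of some generalized Sahlqvist formula: there exists a generalized Sahlqvist formula φ such that for every Kripke frame F and every point w, F, w ⊨ φ under every valuation if and only if F ⊨ α[w]. -/

import Mathlib

set_option autoImplicit true

universe u v w

/-- Modal formulas over modality indices `Λ` and propositional variables `V`. -/
inductive MF (Λ : Type u) (V : Type v) : Type (max u v)
  | var : V → MF Λ V
  | top : MF Λ V
  | bot : MF Λ V
  | and : MF Λ V → MF Λ V → MF Λ V
  | or  : MF Λ V → MF Λ V → MF Λ V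
  | neg : MF Λ V → MF Λ V
  | imp : MF Λ V → MF Λ V → MF Λ V
  | dia : Λ → MF Λ V → MF Λ V
  | box : Λ → MF Λ V → MF Λ V

namespace MF
variable {Λ : Type u} {V : Type v}

/-- The set of propositional variables occurring in a modal formula. -/
def vars : MF Λ V → Set V
  | var p => {p}
  | top => ∅
  | bot => ∅
  | and a b => vars a ∪ vars b
  | or a b => vars a ∪ vars b
  | neg a => vars a
  | imp a b => vars a ∪ vars b
  | dia _ a => vars a
  | box _ a => vars a

end MF

/-- Positive modal formulas: built without `¬` and `→`. -/
inductive Positive {Λ : Type u} {V : Type v} : MF Λ V → Prop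
  | var (p : V) : Positive (.var p)
  | top : Positive .top
  | bot : Positive .bot
  | and {a b} : Positive a → Positive b → Positive (.and a b)
  | or {a b} : Positive a → Positive b → Positive (.or a b)
  | dia (l) {a} : Positive a → Positive (.dia l a)
  | box (l) {a} : Positive a → Positive (.box l a)

/-- A Kripke frame with accessibility relations indexed by `Λ`. -/
structure Frame (Λ : Type u) where
  W : Type w
  R : Λ → W → W → Prop

/-- Kripke satisfaction `F, x, θ ⊨ φ`. -/
def sat {Λ : Type u} {V : Type v} (F : Frame Λ) (θ : V → Set F.W) : F.W → MF Λ V → Prop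
  | x, .var p => x ∈ θ p
  | _, .top => True
  | _, .bot => False
  | x, .and a b => sat F θ x a ∧ sat F θ x b
  | x, .or a b => sat F θ x a ∨ sat F θ x b
  | x, .neg a => ¬ sat F θ x a
  | x, .imp a b => sat F θ x a → sat F θ x b
  | x, .dia l a => ∃ y, F.R l x y ∧ sat F θ y a
  | x, .box l a => ∀ y, F.R l x y → sat F θ y a

/-- `BoxF φ p S`: `φ` is a box-formula with head `p`, in which the set of variables
occurring not as the head is `S`. -/
inductive BoxF {Λ : Type u} {V : Type v} : MF Λ V → V → Set V → Prop
  | var (p : V) : BoxF (.var p) p ∅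
  | imp {POS ψ p S} : Positive POS → BoxF ψ p S → BoxF (.imp POS ψ) p (MF.vars POS ∪ S)
  | box (l) {ψ p S} : BoxF ψ p S → BoxF (.box l ψ) p S

/-- `RegBF r φ p`: relative to the rank assignment `r`, `φ` is a regular box-formula
with head `p` (of rank `r p`): all variables of the positive antecedents have rank `< r p`. -/
inductive RegBF {Λ : Type u} {V : Type v} (r : V → ℕ) : MF Λ V → V → Prop
  | var (p : V) : RegBF r (.var p) p
  | imp {POS ψ p} : Positive POS → (∀ q ∈ MF.vars POS, r q < r p) →
      RegBF r ψ p → RegBF r (.imp POS ψ) p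
  | box (l) {ψ p} : RegBF r ψ p → RegBF r (.box l ψ) p

/-- The edge relation of the dependency graph of a set `A` of box-formulas:
`p → q` iff `p` occurs (not as the head) in some member of `A` with head `q`. -/
def depEdge {Λ : Type u} {V : Type v} (A : Set (MF Λ V)) (p q : V) : Prop :=
  ∃ φ ∈ A, ∃ S, BoxF φ q S ∧ p ∈ S

/-- A set of box-formulas is regular if its dependency graph has no oriented cycle. -/
def RegularSet {Λ : Type u} {V : Type v} (A : Set (MF Λ V)) : Prop :=
  ∀ p : V, ¬ Relation.TransGen (depEdge A) p p

/-- `R_λ^{-1}(A) = {u : ∃ v, u R_λ v ∧ v ∈ A}`. -/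
def Rinv {Λ : Type u} (F : Frame Λ) (l : Λ) (A : Set F.W) : Set F.W :=
  {u | ∃ v, F.R l u v ∧ v ∈ A}

/-- `R_λ^□(A) = {u : ∀ v, u R_λ v → v ∈ A}`. -/
def RboxOp {Λ : Type u} (F : Frame Λ) (l : Λ) (A : Set F.W) : Set F.W :=
  {u | ∀ v, F.R l u v → v ∈ A}

/-- `R_λ(A) = {u : ∃ v, v R_λ u ∧ v ∈ A}`. -/
def Rfwd {Λ : Type u} (F : Frame Λ) (l : Λ) (A : Set F.W) : Set F.W :=
  {u | ∃ v, F.R l v u ∧ v ∈ A}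

/-- The interpretation of the expression `KP^{POS}` in a frame `F`, the set variables
`P^l_i` being interpreted by `P`.  (Junk value `∅` on non-positive constructors.) -/
def KPsem {Λ : Type u} (F : Frame Λ) (P : ℕ × ℕ → Set F.W) : MF Λ (ℕ × ℕ) → Set F.W
  | .var q => P q
  | .top => Set.univ
  | .bot => ∅
  | .and a b => KPsem F P a ∩ KPsem F P b
  | .or a b => KPsem F P a ∪ KPsem F P b
  | .dia l a => Rinv F l (KPsem F P a)
  | .box l a => RboxOp F l (KPsem F P a)
  | .neg _ => ∅
  | .imp _ _ => ∅

/-- The interpretation of the expression `KV^φ` in a frame `F`: the set variables `P^l_i`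
are interpreted by `P` and the extra variable `#` by the second argument.
(Junk value `∅` on constructors that do not occur in regular box-formulas.) -/
def KVsem {Λ : Type u} (F : Frame Λ) (P : ℕ × ℕ → Set F.W) : MF Λ (ℕ × ℕ) → Set F.W → Set F.W
  | .var _, X => X
  | .imp POS ψ, X => KVsem F P ψ (X ∩ KPsem F P POS)
  | .box l ψ, X => KVsem F P ψ (Rfwd F l X)
  | _, _ => ∅

/-- The semantic minimal valuation: given points `g j` and sets `f j` of regular
box-formulas to be verified at `g j`, `thetaMinSem F g f k i` is the minimal value of the
variable `p^k_i`; it is defined by recursion on the rank `k` as the union, over all `j` and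
all `φ ∈ f j` with head `p^k_i`, of `KV^φ(g j)` computed with the minimal values of the
variables of lower rank. -/
noncomputable def thetaMinSem {Λ : Type u} (F : Frame Λ) {ι : Type w} (g : ι → F.W)
    (f : ι → Set (MF Λ (ℕ × ℕ))) : ℕ → ℕ → Set F.W :=
  fun k => Nat.strongRecOn (motive := fun _ => ℕ → Set F.W) k fun k ih i =>
    ⋃ (j : ι), ⋃ φ ∈ f j, ⋃ (_ : RegBF Prod.fst φ (k, i)),
      KVsem F (fun q => if h : q.1 < k then ih q.1 h q.2 else ∅) φ {g j}

/-- `L`-expressions: terms of the language `L` with individual variables `x_i` (`i : ℕ`),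
constants `⊤, ⊥`, unary `R_λ^{-1}`, `R_λ^□`, `R_λ` and binary `∩`, `∪`. -/
inductive LExp (Λ : Type u) : Type u
  | var : ℕ → LExp Λ
  | top : LExp Λ
  | bot : LExp Λ
  | inter : LExp Λ → LExp Λ → LExp Λ
  | union : LExp Λ → LExp Λ → LExp Λ
  | rinv : Λ → LExp Λ → LExp Λ
  | rbox : Λ → LExp Λ → LExp Λ
  | rfw : Λ → LExp Λ → LExp Λ

namespace LExp
variable {Λ : Type u}

/-- Denotation of an `L`-expression in a frame `F`, the variable `x_i` denoting the
singleton of the point `g i`. -/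
def den (F : Frame Λ) (g : ℕ → F.W) : LExp Λ → Set F.W
  | var i => {g i}
  | top => Set.univ
  | bot => ∅
  | inter a b => den F g a ∩ den F g b
  | union a b => den F g a ∪ den F g b
  | rinv l a => Rinv F l (den F g a)
  | rbox l a => RboxOp F l (den F g a)
  | rfw l a => Rfwd F l (den F g a)

/-- The set of (indices of) individual variables occurring in an `L`-expression. -/
def evars : LExp Λ → Set ℕ
  | var i => {i}
  | top => ∅
  | bot => ∅
  | inter a b => evars a ∪ evars b
  | union a b => evars a ∪ evars b
  | rinv _ a => evars a
  | rbox _ a => evars a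
  | rfw _ a => evars a

end LExp

/-- The subexpression relation on `L`-expressions. -/
inductive Subexp {Λ : Type u} : LExp Λ → LExp Λ → Prop
  | refl (e : LExp Λ) : Subexp e e
  | interL {e a b} : Subexp e a → Subexp e (.inter a b)
  | interR {e a b} : Subexp e b → Subexp e (.inter a b)
  | unionL {e a b} : Subexp e a → Subexp e (.union a b)
  | unionR {e a b} : Subexp e b → Subexp e (.union a b)
  | rinv (l) {e a} : Subexp e a → Subexp e (.rinv l a)
  | rbox (l) {e a} : Subexp e a → Subexp e (.rbox l a)
  | rfw (l) {e a} : Subexp e a → Subexp e (.rfw l a)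

/-- `SafeFor e`: `e` is "safe for" the ambient expression, i.e. `e` is a variable, or
`R_λ(e')` with `e'` safe for it, or an intersection one of whose components is safe for it. -/
inductive SafeFor {Λ : Type u} : LExp Λ → Prop
  | var (i : ℕ) : SafeFor (.var i)
  | rfw (l) {a} : SafeFor a → SafeFor (.rfw l a)
  | interL {a b} : SafeFor a → SafeFor (.inter a b)
  | interR {a b} : SafeFor b → SafeFor (.inter a b)

/-- An `L`-expression is safe if it is safe for itself and the argument of every
subexpression of the form `R_λ(ψ)` is safe for it. -/
def Safe {Λ : Type u} (e : LExp Λ) : Prop :=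
  SafeFor e ∧ ∀ l a, Subexp (.rfw l a) e → SafeFor a

mutual
  /-- The class `K`: the least class of `L`-expressions containing the variables and closed
  under `S ↦ R_λ(S)` and `S ↦ S ∩ E` for `E` a positive combination of members of `K`. -/
  inductive InK {Λ : Type u} : LExp Λ → Prop
    | var (i : ℕ) : InK (.var i)
    | rfw (l : Λ) {S : LExp Λ} : InK S → InK (.rfw l S)
    | inter {S E : LExp Λ} : InK S → PosOfK E → InK (.inter S E)
  /-- Positive combinations of members of `K`: built from members of `K` using only
  `∩`, `∪`, `R_λ^{-1}`, `R_λ^□`, `⊤`, `⊥`. -/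
  inductive PosOfK {Λ : Type u} : LExp Λ → Prop
    | ofK {e : LExp Λ} : InK e → PosOfK e
    | top : PosOfK .top
    | bot : PosOfK .bot
    | inter {a b} : PosOfK a → PosOfK b → PosOfK (.inter a b)
    | union {a b} : PosOfK a → PosOfK b → PosOfK (.union a b)
    | rinv (l) {a} : PosOfK a → PosOfK (.rinv l a)
    | rbox (l) {a} : PosOfK a → PosOfK (.rbox l a)
end

/-- Quasi-safe `L`-expressions: positive combinations of safe expressions, i.e. built from
safe expressions using only `∩`, `∪`, `R_λ^{-1}`, `R_λ^□`, `⊤`, `⊥`. -/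
inductive QuasiSafe {Λ : Type u} : LExp Λ → Prop
  | safe {e : LExp Λ} : Safe e → QuasiSafe e
  | top : QuasiSafe .top
  | bot : QuasiSafe .bot
  | inter {a b} : QuasiSafe a → QuasiSafe b → QuasiSafe (.inter a b)
  | union {a b} : QuasiSafe a → QuasiSafe b → QuasiSafe (.union a b)
  | rinv (l) {a} : QuasiSafe a → QuasiSafe (.rinv l a)
  | rbox (l) {a} : QuasiSafe a → QuasiSafe (.rbox l a)

/-- `ReplOne i ψ φ φ'`: `φ'` is the result of replacing one occurrence of the variable
`x_i` in `φ` by `ψ`. -/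
inductive ReplOne {Λ : Type u} (i : ℕ) (ψ : LExp Λ) : LExp Λ → LExp Λ → Prop
  | here : ReplOne i ψ (.var i) ψ
  | interL {a a' b} : ReplOne i ψ a a' → ReplOne i ψ (.inter a b) (.inter a' b)
  | interR {a b b'} : ReplOne i ψ b b' → ReplOne i ψ (.inter a b) (.inter a b')
  | unionL {a a' b} : ReplOne i ψ a a' → ReplOne i ψ (.union a b) (.union a' b)
  | unionR {a b b'} : ReplOne i ψ b b' → ReplOne i ψ (.union a b) (.union a b')
  | rinv (l) {a a'} : ReplOne i ψ a a' → ReplOne i ψ (.rinv l a) (.rinv l a')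
  | rbox (l) {a a'} : ReplOne i ψ a a' → ReplOne i ψ (.rbox l a) (.rbox l a')
  | rfw (l) {a a'} : ReplOne i ψ a a' → ReplOne i ψ (.rfw l a) (.rfw l a')

/-- A finite union of `L`-expressions (empty union is `⊥`). -/
def unionList {Λ : Type u} : List (LExp Λ) → LExp Λ
  | [] => .bot
  | e :: es => .union e (unionList es)

/-- `UnionOfSafe e`: `e` is a finite union of safe expressions. -/
inductive UnionOfSafe {Λ : Type u} : LExp Λ → Prop
  | bot : UnionOfSafe .bot
  | safe {e : LExp Λ} : Safe e → UnionOfSafe e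
  | union {a b} : UnionOfSafe a → UnionOfSafe b → UnionOfSafe (.union a b)

/-- Syntactic `KP^{POS}`: the `L`-expression obtained from the positive formula `POS` by
replacing each set variable `P^l_i` by the `L`-expression `KF (l, i)`.
(Junk value on non-positive constructors.) -/
def KPsub {Λ : Type u} (KF : ℕ × ℕ → LExp Λ) : MF Λ (ℕ × ℕ) → LExp Λ
  | .var q => KF q
  | .top => .top
  | .bot => .bot
  | .and a b => .inter (KPsub KF a) (KPsub KF b)
  | .or a b => .union (KPsub KF a) (KPsub KF b)
  | .dia l a => .rinv l (KPsub KF a)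
  | .box l a => .rbox l (KPsub KF a)
  | .neg _ => .bot
  | .imp _ _ => .bot

/-- Syntactic `KVF^φ(t)`: the `L`-expression obtained from `KV^φ` by substituting the
`L`-expression `t` for `#` and `KF (l, i)` for each set variable `P^l_i`.
(Junk value on constructors that do not occur in regular box-formulas.) -/
def KVFsyn {Λ : Type u} (KF : ℕ × ℕ → LExp Λ) : MF Λ (ℕ × ℕ) → LExp Λ → LExp Λ
  | .var _, t => t
  | .imp POS ψ, t => KVFsyn KF ψ (.inter t (KPsub KF POS))
  | .box l ψ, t => KVFsyn KF ψ (.rfw l t)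
  | _, _ => .bot

open scoped Classical in
/-- The syntactic minimal valuation `KF_f^{p^k_i}` for variables `x_0, …, x_{n-1}` and
`f` assigning to each variable a finite set of regular box-formulas: defined by recursion on
the rank `k` as the union, over all `j < n` and all `φ ∈ f j` with head `p^k_i`, of
`KVF_f^φ(x_j)`, which is `KV^φ` with `x_j` substituted for `#` and `KF_f^{p^l_m}`
substituted for each `P^l_m` with `l < k`. -/
noncomputable def KFsyn {Λ : Type u} (n : ℕ) (f : ℕ → Finset (MF Λ (ℕ × ℕ))) :
    ℕ → ℕ → LExp Λ :=
  fun k => Nat.strongRecOn (motive := fun _ => ℕ → LExp Λ) k fun k ih i =>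
    unionList (((List.range n).flatMap fun j =>
      ((f j).toList.filter fun φ => decide (RegBF Prod.fst φ (k, i))).map fun φ =>
        KVFsyn (fun q => if h : q.1 < k then ih q.1 h q.2 else LExp.bot) φ (LExp.var j)))

/-- The expressions substituted for the set variables `P^l_m`, `l < k`, in `KVF`:
the syntactic minimal valuations of the lower ranks. -/
noncomputable def lowKF {Λ : Type u} (n : ℕ) (f : ℕ → Finset (MF Λ (ℕ × ℕ))) (k : ℕ) :
    ℕ × ℕ → LExp Λ :=
  fun q => if q.1 < k then KFsyn n f q.1 q.2 else LExp.bot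

/-- `KVFat n f φ j k` is the `L`-expression `KVF_f^φ(x_j)` for `φ` a regular box-formula
of rank `k`. -/
noncomputable def KVFat {Λ : Type u} (n : ℕ) (f : ℕ → Finset (MF Λ (ℕ × ℕ)))
    (φ : MF Λ (ℕ × ℕ)) (j k : ℕ) : LExp Λ :=
  KVFsyn (lowKF n f k) φ (.var j)

/-- A labelled tree-like structure: a set of vertices with relations indexed by `Λ`,
a root, and a label function assigning to every vertex a set of labels from `α`. -/
structure LabTree (Λ : Type u) (α : Type v) where
  V : Type
  R : Λ → V → V → Prop
  root : V
  label : V → Set α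

/-- Derivation trees witnessing that a formula is built from base formulas using only
`∧` and `◇_λ`. -/
inductive BuiltT (Λ : Type u) (V : Type v) : Type (max u v)
  | base : MF Λ V → BuiltT Λ V
  | and : BuiltT Λ V → BuiltT Λ V → BuiltT Λ V
  | dia : Λ → BuiltT Λ V → BuiltT Λ V

/-- The modal formula described by a derivation tree. -/
def BuiltT.formula {Λ : Type u} {V : Type v} : BuiltT Λ V → MF Λ V
  | base φ => φ
  | and a b => .and a.formula b.formula
  | dia l a => .dia l a.formula

/-- The derivation tree uses only base formulas from `A`. -/
def BuiltT.Ok {Λ : Type u} {V : Type v} (A : Set (MF Λ V)) : BuiltT Λ V → Prop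
  | base φ => φ ∈ A
  | and a b => a.Ok A ∧ b.Ok A
  | dia _ a => a.Ok A

/-- Helper for gluing two labelled trees at their roots: the relation on the disjoint sum,
with the edges out of the second root re-attached to the first root. -/
def glueR {Λ : Type u} {W₁ W₂ : Type} (R₁ : Λ → W₁ → W₁ → Prop) (R₂ : Λ → W₂ → W₂ → Prop)
    (r₁ : W₁) (r₂ : W₂) (l : Λ) : W₁ ⊕ W₂ → W₁ ⊕ W₂ → Prop
  | Sum.inl a, Sum.inl b => R₁ l a b
  | Sum.inr a, Sum.inr b => R₂ l a b
  | Sum.inl a, Sum.inr b => a = r₁ ∧ R₂ l r₂ b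
  | Sum.inr _, Sum.inl _ => False

open Classical in
/-- Helper for gluing two labelled trees at their roots: the label function, the glued root
receiving the union of the two root labels. -/
noncomputable def glueLab {α : Type w} {W₁ W₂ : Type} (L₁ : W₁ → Set α) (L₂ : W₂ → Set α)
    (r₁ : W₁) (r₂ : W₂) : W₁ ⊕ W₂ → Set α
  | Sum.inl a => if a = r₁ then L₁ r₁ ∪ L₂ r₂ else L₁ a
  | Sum.inr b => L₂ b

/-- Helper for prefixing a labelled tree with a new root: the relation on `Option W`,
with an `R_{l₀}`-edge from the new root `none` to the old root `r`. -/
def prefR {Λ : Type u} {W : Type} (R : Λ → W → W → Prop) (l₀ : Λ) (r : W) (l : Λ) :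
    Option W → Option W → Prop
  | none, some w => l = l₀ ∧ w = r
  | some a, some b => R l a b
  | _, _ => False

/-- Helper for prefixing a labelled tree with a new root: the label function, the new root
getting the empty label. -/
def prefLab {α : Type w} {W : Type} (L : W → Set α) : Option W → Set α
  | none => ∅
  | some a => L a

/-- The reduced syntactical tree of a formula built from base formulas using `∧` and `◇_λ`:
a single root labelled `{a}` for a base formula `a`; for a conjunction, the two trees
with their roots identified (labels united); for `◇_λ ψ`, a new root with empty label and an
`R_λ`-edge to the root of the tree of `ψ`. -/
noncomputable def TreeOf {Λ : Type u} {V : Type v} : BuiltT Λ V → LabTree Λ (MF Λ V)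
  | .base φ =>
      { V := Unit, R := fun _ _ _ => False, root := (), label := fun _ => {φ} }
  | .and b₁ b₂ =>
      let T₁ := TreeOf b₁
      let T₂ := TreeOf b₂
      { V := {v : T₁.V ⊕ T₂.V // v ≠ Sum.inr T₂.root},
        R := fun l u v => glueR T₁.R T₂.R T₁.root T₂.root l u.1 v.1,
        root := ⟨Sum.inl T₁.root, by exact Sum.inl_ne_inr⟩,
        label := fun v => glueLab T₁.label T₂.label T₁.root T₂.root v.1 }
  | .dia l b =>
      let T := TreeOf b
      { V := Option T.V,
        R := fun l' u v => prefR T.R l T.root l' u v,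
        root := none,
        label := fun v => prefLab T.label v }

/-- Restrictedly positive first-order formulas over the frame language: built from atoms
`y ∈ E` (`E` an `L`-expression) using `∧`, `∨` and the restricted quantifiers
`(∀ y ◁_λ x)` and `(∃ y ◁_λ x)`. -/
inductive KrF (Λ : Type u) : Type u
  | atom : ℕ → LExp Λ → KrF Λ
  | and : KrF Λ → KrF Λ → KrF Λ
  | or : KrF Λ → KrF Λ → KrF Λ
  | all : ℕ → Λ → ℕ → KrF Λ → KrF Λ
  | ex : ℕ → Λ → ℕ → KrF Λ → KrF Λ

namespace KrF
variable {Λ : Type u}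

/-- Truth of a restrictedly positive formula in a frame under an assignment `g` of points to
individual variables; the atom `y ∈ E` is read via the `#`-translation, i.e. as membership
of `g y` in the denotation of `E`. -/
def holds (F : Frame Λ) : (ℕ → F.W) → KrF Λ → Prop
  | g, atom y E => g y ∈ E.den F g
  | g, and a b => holds F g a ∧ holds F g b
  | g, or a b => holds F g a ∨ holds F g b
  | g, all y l x β => ∀ w, F.R l (g x) w → holds F (Function.update g y w) β
  | g, ex y l x β => ∃ w, F.R l (g x) w ∧ holds F (Function.update g y w) β

/-- Free variables. -/
def fv : KrF Λ → Set ℕ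
  | atom y E => insert y E.evars
  | and a b => fv a ∪ fv b
  | or a b => fv a ∪ fv b
  | all y _ x β => insert x (fv β \ {y})
  | ex y _ x β => insert x (fv β \ {y})

/-- Bound variables. -/
def bv : KrF Λ → Set ℕ
  | atom _ _ => ∅
  | and a b => bv a ∪ bv b
  | or a b => bv a ∪ bv b
  | all y _ _ β => insert y (bv β)
  | ex y _ _ β => insert y (bv β)

/-- No two distinct quantifier occurrences bind the same variable. -/
def CleanBound : KrF Λ → Prop
  | atom _ _ => True
  | and a b => CleanBound a ∧ CleanBound b ∧ bv a ∩ bv b = ∅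
  | or a b => CleanBound a ∧ CleanBound b ∧ bv a ∩ bv b = ∅
  | all y _ _ β => CleanBound β ∧ y ∉ bv β
  | ex y _ _ β => CleanBound β ∧ y ∉ bv β

/-- Clean formulas: no variable occurs both free and bound, and no two distinct quantifier
occurrences bind the same variable. -/
def Clean (φ : KrF Λ) : Prop := fv φ ∩ bv φ = ∅ ∧ CleanBound φ

/-- All the `L`-expressions occurring in atoms of the formula satisfy `P`. -/
def AtomsAll (P : LExp Λ → Prop) : KrF Λ → Prop
  | atom _ E => P E
  | and a b => AtomsAll P a ∧ AtomsAll P b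
  | or a b => AtomsAll P a ∧ AtomsAll P b
  | all _ _ _ β => AtomsAll P β
  | ex _ _ _ β => AtomsAll P β

/-- Quantifier-free formulas (built from atoms using only `∧` and `∨`). -/
def QFree : KrF Λ → Prop
  | atom _ _ => True
  | and a b => QFree a ∧ QFree b
  | or a b => QFree a ∧ QFree b
  | all _ _ _ _ => False
  | ex _ _ _ _ => False

/-- Formulas built from atoms using only `∧`, `∨` and restricted universal quantification
(no existential quantifier). -/
def NoEx : KrF Λ → Prop
  | atom _ _ => True
  | and a b => NoEx a ∧ NoEx b
  | or a b => NoEx a ∧ NoEx b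
  | all _ _ _ β => NoEx β
  | ex _ _ _ _ => False

/-- `GKok U e φ`: every variable occurring in an `L`-expression of an atom of `φ` is
inherently universal. Here `U` is the set of variables that are inherently universal so far
(initially the free variables) and `e` records whether we are within the scope of an
existential quantifier. -/
def GKok : Set ℕ → Bool → KrF Λ → Prop
  | U, _, atom _ E => E.evars ⊆ U
  | U, e, and a b => GKok U e a ∧ GKok U e b
  | U, e, or a b => GKok U e a ∧ GKok U e b
  | U, false, all y _ _ β => GKok (insert y U) false β
  | U, true, all _ _ _ β => GKok U true β
  | U, _, ex _ _ _ β => GKok U true β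

end KrF

/-- A generalized Kracht formula with free variables: clean, restrictedly positive with safe
atoms, and in every atom `y ∈ E` all variables of `E` are inherently universal. -/
def IsGenKrachtFV {Λ : Type u} (α : KrF Λ) : Prop :=
  α.Clean ∧ α.AtomsAll Safe ∧ α.GKok α.fv false

/-- A generalized Kracht formula: a generalized Kracht formula with free variables whose
only free variable is `x0`. -/
def IsGenKracht {Λ : Type u} (α : KrF Λ) (x0 : ℕ) : Prop :=
  IsGenKrachtFV α ∧ α.fv = {x0}

/-- Generalized Sahlqvist antecedents: built from regular box-formulas and negative
formulas using only `∧`, `∨`, `◇_λ`. -/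
inductive GSAnt {Λ : Type u} : MF Λ (ℕ × ℕ) → Prop
  | reg {φ p} : RegBF Prod.fst φ p → GSAnt φ
  | neg {φ} : Positive φ → GSAnt (.neg φ)
  | and {a b} : GSAnt a → GSAnt b → GSAnt (.and a b)
  | or {a b} : GSAnt a → GSAnt b → GSAnt (.or a b)
  | dia (l) {a} : GSAnt a → GSAnt (.dia l a)

/-- Generalized Sahlqvist formulas: built from generalized Sahlqvist implications
`GSA → ⊥` by applying boxes and conjunctions, and disjunctions only to formulas without
common propositional variables. -/
inductive GSF {Λ : Type u} : MF Λ (ℕ × ℕ) → Prop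
  | impl {a} : GSAnt a → GSF (.imp a .bot)
  | box (l) {a} : GSF a → GSF (.box l a)
  | and {a b} : GSF a → GSF b → GSF (.and a b)
  | or {a b} : GSF a → GSF b → MF.vars a ∩ MF.vars b = ∅ → GSF (.or a b)

open Classical in
/-- The modal translation `E^T` of a quasi-safe expression: safe subexpressions are
replaced by their associated propositional variables `p_E`, and `∩, ∪, R^{-1}_λ, R^□_λ`
become `∧, ∨, ◇_λ, □_λ`. -/
noncomputable def Etrans {Λ : Type u} (pE : LExp Λ → ℕ × ℕ) : LExp Λ → MF Λ (ℕ × ℕ)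
  | .var i => .var (pE (.var i))
  | .top => .top
  | .bot => .bot
  | .inter a b =>
      if Safe (LExp.inter a b) then .var (pE (.inter a b))
      else .and (Etrans pE a) (Etrans pE b)
  | .union a b =>
      if Safe (LExp.union a b) then .var (pE (.union a b))
      else .or (Etrans pE a) (Etrans pE b)
  | .rinv l a =>
      if Safe (LExp.rinv l a) then .var (pE (.rinv l a)) else .dia l (Etrans pE a)
  | .rbox l a =>
      if Safe (LExp.rbox l a) then .var (pE (.rbox l a)) else .box l (Etrans pE a)
  | .rfw l a => if Safe (LExp.rfw l a) then .var (pE (.rfw l a)) else .bot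

/-- A finite disjunction of modal formulas (empty disjunction is `⊥`). -/
def orList {Λ : Type u} {V : Type v} : List (MF Λ V) → MF Λ V
  | [] => .bot
  | a :: as => .or a (orList as)



set_option autoImplicit false
set_option maxHeartbeats 1000000

open Classical


namespace P13

variable {Λ : Type u}

/-! ### Expression utilities -/

/-- size of an L-expression -/
def esz : LExp Λ → ℕ
  | .var _ => 1
  | .top => 1
  | .bot => 1
  | .inter a b => esz a + esz b + 1
  | .union a b => esz a + esz b + 1
  | .rinv _ a => esz a + 1
  | .rbox _ a => esz a + 1
  | .rfw _ a => esz a + 1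

/-- list of all subexpressions (including itself) -/
def subL : LExp Λ → List (LExp Λ)
  | .var i => [.var i]
  | .top => [.top]
  | .bot => [.bot]
  | .inter a b => .inter a b :: (subL a ++ subL b)
  | .union a b => .union a b :: (subL a ++ subL b)
  | .rinv l a => .rinv l a :: subL a
  | .rbox l a => .rbox l a :: subL a
  | .rfw l a => .rfw l a :: subL a

theorem subexp_trans {a b c : LExp Λ} (h1 : Subexp a b) (h2 : Subexp b c) : Subexp a c := by
  induction h2 with
  | refl => exact h1
  | interL _ ih => exact .interL (ih h1)
  | interR _ ih => exact .interR (ih h1)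
  | unionL _ ih => exact .unionL (ih h1)
  | unionR _ ih => exact .unionR (ih h1)
  | rinv l _ ih => exact .rinv l (ih h1)
  | rbox l _ ih => exact .rbox l (ih h1)
  | rfw l _ ih => exact .rfw l (ih h1)

theorem mem_subL_iff {e E : LExp Λ} : e ∈ subL E ↔ Subexp e E := by
  have fwd : ∀ E e : LExp Λ, e ∈ subL E → Subexp e E := by
    intro E
    induction E with
    | var i => intro e h; simp [subL] at h; subst h; exact .refl _
    | top => intro e h; simp [subL] at h; subst h; exact .refl _
    | bot => intro e h; simp [subL] at h; subst h; exact .refl _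
    | inter a b iha ihb =>
      intro e h
      simp only [subL, List.mem_cons, List.mem_append] at h
      rcases h with rfl | h | h
      · exact .refl _
      · exact .interL (iha _ h)
      · exact .interR (ihb _ h)
    | union a b iha ihb =>
      intro e h
      simp only [subL, List.mem_cons, List.mem_append] at h
      rcases h with rfl | h | h
      · exact .refl _
      · exact .unionL (iha _ h)
      · exact .unionR (ihb _ h)
    | rinv l a iha =>
      intro e h
      simp only [subL, List.mem_cons] at h
      rcases h with rfl | h
      · exact .refl _
      · exact .rinv l (iha _ h)
    | rbox l a iha =>
      intro e h
      simp only [subL, List.mem_cons] at h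
      rcases h with rfl | h
      · exact .refl _
      · exact .rbox l (iha _ h)
    | rfw l a iha =>
      intro e h
      simp only [subL, List.mem_cons] at h
      rcases h with rfl | h
      · exact .refl _
      · exact .rfw l (iha _ h)
  constructor
  · exact fwd E e
  · intro h
    induction h with
    | refl e => cases e <;> simp [subL]
    | interL _ ih => exact List.mem_cons_of_mem _ (List.mem_append.2 (Or.inl ih))
    | interR _ ih => exact List.mem_cons_of_mem _ (List.mem_append.2 (Or.inr ih))
    | unionL _ ih => exact List.mem_cons_of_mem _ (List.mem_append.2 (Or.inl ih))
    | unionR _ ih => exact List.mem_cons_of_mem _ (List.mem_append.2 (Or.inr ih))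
    | rinv l _ ih => exact List.mem_cons_of_mem _ ih
    | rbox l _ ih => exact List.mem_cons_of_mem _ ih
    | rfw l _ ih => exact List.mem_cons_of_mem _ ih

theorem esz_pos (e : LExp Λ) : 0 < esz e := by cases e <;> simp [esz] <;> omega

theorem subexp_esz_le {a b : LExp Λ} (h : Subexp a b) : esz a ≤ esz b := by
  induction h with
  | refl => exact le_rfl
  | interL _ ih => simp [esz]; omega
  | interR _ ih => simp [esz]; omega
  | unionL _ ih => simp [esz]; omega
  | unionR _ ih => simp [esz]; omega
  | rinv l _ ih => simp [esz]; omega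
  | rbox l _ ih => simp [esz]; omega
  | rfw l _ ih => simp [esz]; omega

theorem subexp_evars_subset {a b : LExp Λ} (h : Subexp a b) : a.evars ⊆ b.evars := by
  induction h with
  | refl => exact subset_rfl
  | interL _ ih => exact ih.trans (by simp [LExp.evars])
  | interR _ ih => exact ih.trans (by simp [LExp.evars])
  | unionL _ ih => exact ih.trans (by simp [LExp.evars])
  | unionR _ ih => exact ih.trans (by simp [LExp.evars])
  | rinv l _ ih => exact ih.trans (by simp [LExp.evars])
  | rbox l _ ih => exact ih.trans (by simp [LExp.evars])
  | rfw l _ ih => exact ih.trans (by simp [LExp.evars])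

/-- every `rfw`-subexpression of a safe expression is safe -/
theorem safe_of_rfw_subexp {E : LExp Λ} (hE : Safe E) {l : Λ} {a : LExp Λ}
    (h : Subexp (.rfw l a) E) : Safe (LExp.rfw l a) := by
  refine ⟨SafeFor.rfw l (hE.2 l a h), ?_⟩
  intro l' a' h'
  exact hE.2 l' a' (subexp_trans h' h)

theorem safe_var (i : ℕ) : Safe (LExp.var i : LExp Λ) := by
  refine ⟨SafeFor.var i, ?_⟩
  intro l a h
  cases h

/-- safety is inherited downward along inter/rfw spines -/
theorem safe_interL {a b : LExp Λ} (h : Safe (LExp.inter a b)) (ha : SafeFor a) : Safe a :=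
  ⟨ha, fun l e he => h.2 l e (Subexp.interL he)⟩
theorem safe_interR {a b : LExp Λ} (h : Safe (LExp.inter a b)) (hb : SafeFor b) : Safe b :=
  ⟨hb, fun l e he => h.2 l e (Subexp.interR he)⟩
theorem safe_rfwArg {l : Λ} {a : LExp Λ} (h : Safe (LExp.rfw l a)) : Safe a :=
  ⟨h.2 l a (Subexp.refl _), fun l' e he => h.2 l' e (Subexp.rfw l he)⟩

/-! ### den congruence -/

theorem den_congr {F : Frame Λ} {g g' : ℕ → F.W} (E : LExp Λ)
    (h : ∀ i ∈ E.evars, g i = g' i) : E.den F g = E.den F g' := by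
  induction E with
  | var i => simp [LExp.den, h i (by simp [LExp.evars])]
  | top => rfl
  | bot => rfl
  | inter a b iha ihb =>
    simp only [LExp.den]
    rw [iha (fun i hi => h i (by simp [LExp.evars, hi])),
        ihb (fun i hi => h i (by simp [LExp.evars, hi]))]
  | union a b iha ihb =>
    simp only [LExp.den]
    rw [iha (fun i hi => h i (by simp [LExp.evars, hi])),
        ihb (fun i hi => h i (by simp [LExp.evars, hi]))]
  | rinv l a iha => simp only [LExp.den]; rw [iha (fun i hi => h i hi)]
  | rbox l a iha => simp only [LExp.den]; rw [iha (fun i hi => h i hi)]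
  | rfw l a iha => simp only [LExp.den]; rw [iha (fun i hi => h i hi)]

/-! ### modal formula utilities -/

/-- syntactic list of propositional variables -/
def mvarList {V : Type v} : MF Λ V → List V
  | .var p => [p]
  | .top => []
  | .bot => []
  | .and a b => mvarList a ++ mvarList b
  | .or a b => mvarList a ++ mvarList b
  | .neg a => mvarList a
  | .imp a b => mvarList a ++ mvarList b
  | .dia _ a => mvarList a
  | .box _ a => mvarList a

theorem mem_mvarList_iff {V : Type v} {q : V} {φ : MF Λ V} :
    q ∈ mvarList φ ↔ q ∈ MF.vars φ := by
  induction φ with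
  | var p => simp [mvarList, MF.vars]
  | top => simp [mvarList, MF.vars]
  | bot => simp [mvarList, MF.vars]
  | and a b iha ihb => simp [mvarList, MF.vars, List.mem_append, iha, ihb]
  | or a b iha ihb => simp [mvarList, MF.vars, List.mem_append, iha, ihb]
  | neg a iha => simpa [mvarList, MF.vars] using iha
  | imp a b iha ihb => simp [mvarList, MF.vars, List.mem_append, iha, ihb]
  | dia l a iha => simpa [mvarList, MF.vars] using iha
  | box l a iha => simpa [mvarList, MF.vars] using iha

/-- sat depends on θ only at the variables of the formula -/
theorem sat_congr {V : Type v} {F : Frame Λ} {θ θ' : V → Set F.W} (φ : MF Λ V)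
    (h : ∀ q ∈ MF.vars φ, θ q = θ' q) : ∀ x, sat F θ x φ ↔ sat F θ' x φ := by
  induction φ with
  | var p => intro x; simp [sat, h p (by simp [MF.vars])]
  | top => intro x; simp [sat]
  | bot => intro x; simp [sat]
  | and a b iha ihb =>
    intro x
    simp only [sat]
    rw [iha (fun q hq => h q (Or.inl hq)) x, ihb (fun q hq => h q (Or.inr hq)) x]
  | or a b iha ihb =>
    intro x
    simp only [sat]
    rw [iha (fun q hq => h q (Or.inl hq)) x, ihb (fun q hq => h q (Or.inr hq)) x]
  | neg a iha => intro x; simp only [sat]; rw [iha h x]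
  | imp a b iha ihb =>
    intro x
    simp only [sat]
    rw [iha (fun q hq => h q (Or.inl hq)) x, ihb (fun q hq => h q (Or.inr hq)) x]
  | dia l a iha =>
    intro x
    simp only [sat]
    exact exists_congr fun y => and_congr_right fun _ => iha h y
  | box l a iha =>
    intro x
    simp only [sat]
    exact forall_congr' fun y => imp_congr_right fun _ => iha h y

/-- positive formulas are monotone in the valuation (on the variables occurring) -/
theorem sat_mono {V : Type v} {F : Frame Λ} {θ θ' : V → Set F.W} {φ : MF Λ V}
    (hφ : Positive φ) (h : ∀ q ∈ MF.vars φ, θ q ⊆ θ' q) :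
    ∀ x, sat F θ x φ → sat F θ' x φ := by
  induction hφ with
  | var p => intro x hx; exact h p (by simp [MF.vars]) hx
  | top => intro x _; trivial
  | bot => intro x hx; exact hx
  | and ha hb iha ihb =>
    intro x hx
    exact ⟨iha (fun q hq => h q (Or.inl hq)) x hx.1, ihb (fun q hq => h q (Or.inr hq)) x hx.2⟩
  | or ha hb iha ihb =>
    intro x hx
    rcases hx with hx | hx
    · exact Or.inl (iha (fun q hq => h q (Or.inl hq)) x hx)
    · exact Or.inr (ihb (fun q hq => h q (Or.inr hq)) x hx)
  | dia l ha iha =>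
    rintro x ⟨y, hy, hsat⟩
    exact ⟨y, hy, iha h y hsat⟩
  | box l ha iha =>
    intro x hx y hy
    exact iha h y (hx y hy)

end P13


set_option autoImplicit false
set_option maxHeartbeats 1000000


attribute [local instance] Classical.propDecidable

namespace P13

variable {Λ : Type u}

/-! ### index of an expression in a list -/

noncomputable def idxL : List (LExp Λ) → LExp Λ → ℕ
  | [], _ => 0
  | e' :: L, e => if e' = e then 0 else idxL L e + 1

theorem idxL_lt {L : List (LExp Λ)} {e : LExp Λ} (h : e ∈ L) : idxL L e < L.length := by
  induction L with
  | nil => cases h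
  | cons e' L ih =>
    by_cases he : e' = e
    · simp [idxL, he]
    · rcases List.mem_cons.1 h with h | h
      · exact absurd h.symm he
      · simpa [idxL, he, Nat.succ_lt_succ_iff] using ih h

theorem idxL_get {L : List (LExp Λ)} {e : LExp Λ} (h : e ∈ L) :
    ∀ hl : idxL L e < L.length, L.get ⟨idxL L e, hl⟩ = e := by
  induction L with
  | nil => cases h
  | cons e' L ih =>
    by_cases he : e' = e
    · intro hl; simp [idxL, he]
    · rcases List.mem_cons.1 h with h | h
      · exact absurd h.symm he
      · intro hl
        simp only [idxL, he, if_false] at hl ⊢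
        have hl' : idxL L e < L.length := by
          simpa [List.length_cons, Nat.succ_lt_succ_iff] using hl
        show L.get ⟨idxL L e, hl'⟩ = e
        exact ih h hl' 

theorem idxL_of_get {L : List (LExp Λ)} (hnd : L.Nodup) {i : ℕ} (hi : i < L.length) :
    idxL L (L.get ⟨i, hi⟩) = i := by
  induction L generalizing i with
  | nil => simp at hi
  | cons e' L ih =>
    cases i with
    | zero => simp [idxL]
    | succ i =>
      have hi' : i < L.length := by simpa using hi
      have hne : e' ≠ L.get ⟨i, hi'⟩ := by
        intro he
        exact (List.nodup_cons.1 hnd).1 (he ▸ (L.get_mem _))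
      have : (e' :: L).get ⟨i + 1, hi⟩ = L.get ⟨i, hi'⟩ := rfl
      rw [this]
      simp only [idxL, hne, if_false]
      rw [ih (List.nodup_cons.1 hnd).2 hi']

def SubClosed (L : List (LExp Λ)) : Prop := ∀ E ∈ L, ∀ e, Subexp e E → e ∈ L

/-! ### the minimal valuation candidate -/

noncomputable def pEL (L : List (LExp Λ)) (e : LExp Λ) : ℕ × ℕ := (esz e, idxL L e)

noncomputable def thetaHat (F : Frame Λ) (L : List (LExp Λ)) (g : ℕ → F.W) :
    ℕ × ℕ → Set F.W :=
  fun p => if h : p.2 < L.length then (L.get ⟨p.2, h⟩).den F g else ∅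

theorem thetaHat_pEL {F : Frame Λ} {L : List (LExp Λ)} (hnd : L.Nodup) {g : ℕ → F.W}
    {E : LExp Λ} (h : E ∈ L) : thetaHat F L g (pEL L E) = E.den F g := by
  have hlt : (pEL L E).2 < L.length := idxL_lt h
  simp only [thetaHat, hlt, dif_pos]
  exact congrArg (LExp.den F g) (idxL_get h hlt)

theorem thetaHat_congr {F : Frame Λ} {L : List (LExp Λ)} {g g' : ℕ → F.W} {p : ℕ × ℕ}
    (h : ∀ hp : p.2 < L.length, ∀ i ∈ (L.get ⟨p.2, hp⟩).evars, g i = g' i) :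
    thetaHat F L g p = thetaHat F L g' p := by
  by_cases hp : p.2 < L.length
  · simp only [thetaHat, hp, dif_pos]
    exact den_congr _ (h hp)
  · simp only [thetaHat, hp, dif_neg, not_false_iff]

/-! ### modal translation of quasi-safe expressions -/

noncomputable def mtr (L : List (LExp Λ)) : LExp Λ → MF Λ (ℕ × ℕ)
  | .var i => .var (pEL L (.var i))
  | .top => .top
  | .bot => .bot
  | .inter a b =>
      if Safe (LExp.inter a b) then .var (pEL L (.inter a b))
      else .and (mtr L a) (mtr L b)
  | .union a b =>
      if Safe (LExp.union a b) then .var (pEL L (.union a b))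
      else .or (mtr L a) (mtr L b)
  | .rinv l a =>
      if Safe (LExp.rinv l a) then .var (pEL L (.rinv l a)) else .dia l (mtr L a)
  | .rbox l a =>
      if Safe (LExp.rbox l a) then .var (pEL L (.rbox l a)) else .box l (mtr L a)
  | .rfw l a => if Safe (LExp.rfw l a) then .var (pEL L (.rfw l a)) else .bot

theorem not_safe_top : ¬ Safe (LExp.top : LExp Λ) := fun h => by cases h.1
theorem not_safe_bot : ¬ Safe (LExp.bot : LExp Λ) := fun h => by cases h.1
theorem not_safe_union {a b : LExp Λ} : ¬ Safe (LExp.union a b) := fun h => by cases h.1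
theorem not_safe_rinv {l : Λ} {a : LExp Λ} : ¬ Safe (LExp.rinv l a) := fun h => by cases h.1
theorem not_safe_rbox {l : Λ} {a : LExp Λ} : ¬ Safe (LExp.rbox l a) := fun h => by cases h.1

theorem mtr_safe_eq {L : List (LExp Λ)} {e : LExp Λ} (h : Safe e) :
    mtr L e = .var (pEL L e) := by
  cases e with
  | var i => rfl
  | top => exact absurd h not_safe_top
  | bot => exact absurd h not_safe_bot
  | inter a b => simp [mtr, h]
  | union a b => simp [mtr, h]
  | rinv l a => simp [mtr, h]
  | rbox l a => simp [mtr, h]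
  | rfw l a => simp [mtr, h]

theorem mtr_pos (L : List (LExp Λ)) (e : LExp Λ) : Positive (mtr L e) := by
  induction e with
  | var i => exact .var _
  | top => exact .top
  | bot => exact .bot
  | inter a b iha ihb =>
    simp only [mtr]; split
    · exact .var _
    · exact .and iha ihb
  | union a b iha ihb =>
    simp only [mtr]; split
    · exact .var _
    · exact .or iha ihb
  | rinv l a iha =>
    simp only [mtr]; split
    · exact .var _
    · exact .dia l iha
  | rbox l a iha =>
    simp only [mtr]; split
    · exact .var _
    · exact .box l iha
  | rfw l a iha =>
    simp only [mtr]; split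
    · exact .var _
    · exact .bot

theorem mtr_vars {L : List (LExp Λ)} {e : LExp Λ} :
    ∀ q ∈ MF.vars (mtr L e), ∃ E', Subexp E' e ∧ Safe E' ∧ q = pEL L E' := by
  induction e with
  | var i =>
    intro q hq
    simp [mtr, MF.vars] at hq
    exact ⟨.var i, .refl _, safe_var i, hq⟩
  | top => intro q hq; simp [mtr, MF.vars] at hq
  | bot => intro q hq; simp [mtr, MF.vars] at hq
  | inter a b iha ihb =>
    intro q hq
    simp only [mtr] at hq
    split at hq
    · next hs => simp [MF.vars] at hq; exact ⟨_, .refl _, hs, hq⟩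
    · rcases hq with hq | hq
      · obtain ⟨E', h1, h2, h3⟩ := iha q hq; exact ⟨E', .interL h1, h2, h3⟩
      · obtain ⟨E', h1, h2, h3⟩ := ihb q hq; exact ⟨E', .interR h1, h2, h3⟩
  | union a b iha ihb =>
    intro q hq
    simp only [mtr] at hq
    split at hq
    · next hs => simp [MF.vars] at hq; exact ⟨_, .refl _, hs, hq⟩
    · rcases hq with hq | hq
      · obtain ⟨E', h1, h2, h3⟩ := iha q hq; exact ⟨E', .unionL h1, h2, h3⟩
      · obtain ⟨E', h1, h2, h3⟩ := ihb q hq; exact ⟨E', .unionR h1, h2, h3⟩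
  | rinv l a iha =>
    intro q hq
    simp only [mtr] at hq
    split at hq
    · next hs => simp [MF.vars] at hq; exact ⟨_, .refl _, hs, hq⟩
    · obtain ⟨E', h1, h2, h3⟩ := iha q hq; exact ⟨E', .rinv l h1, h2, h3⟩
  | rbox l a iha =>
    intro q hq
    simp only [mtr] at hq
    split at hq
    · next hs => simp [MF.vars] at hq; exact ⟨_, .refl _, hs, hq⟩
    · obtain ⟨E', h1, h2, h3⟩ := iha q hq; exact ⟨E', .rbox l h1, h2, h3⟩
  | rfw l a iha =>
    intro q hq
    simp only [mtr] at hq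
    split at hq
    · next hs => simp [MF.vars] at hq; exact ⟨_, .refl _, hs, hq⟩
    · simp [MF.vars] at hq

/-- S1: lower bound for the modal translation. -/
theorem den_sub_mtr {F : Frame Λ} {L : List (LExp Λ)} {θ : ℕ × ℕ → Set F.W} {g : ℕ → F.W}
    {E : LExp Λ} (hE : Safe E) :
    ∀ Q, Subexp Q E →
      (∀ E', Subexp E' Q → Safe E' → E'.den F g ⊆ θ (pEL L E')) →
      ∀ x ∈ Q.den F g, sat F θ x (mtr L Q) := by
  intro Q
  induction Q with
  | var i =>
    intro _ H x hx
    have := H _ (.refl _) (safe_var i) hx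
    simpa [mtr, sat] using this
  | top => intro _ _ x _; trivial
  | bot => intro _ _ x hx; exact hx
  | inter a b iha ihb =>
    intro hQE H x hx
    simp only [mtr]
    split
    · next hs => exact H _ (.refl _) hs hx
    · exact ⟨iha (subexp_trans (.interL (.refl _)) hQE)
        (fun E' h1 h2 => H E' (.interL h1) h2) x hx.1,
        ihb (subexp_trans (.interR (.refl _)) hQE)
        (fun E' h1 h2 => H E' (.interR h1) h2) x hx.2⟩
  | union a b iha ihb =>
    intro hQE H x hx
    simp only [mtr]
    split
    · next hs => exact H _ (.refl _) hs hx
    · rcases hx with hx | hx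
      · exact Or.inl (iha (subexp_trans (.unionL (.refl _)) hQE)
          (fun E' h1 h2 => H E' (.unionL h1) h2) x hx)
      · exact Or.inr (ihb (subexp_trans (.unionR (.refl _)) hQE)
          (fun E' h1 h2 => H E' (.unionR h1) h2) x hx)
  | rinv l a iha =>
    intro hQE H x hx
    simp only [mtr]
    split
    · next hs => exact H _ (.refl _) hs hx
    · obtain ⟨y, h1, h2⟩ := hx
      exact ⟨y, h1, iha (subexp_trans (.rinv l (.refl _)) hQE)
        (fun E' ha hb => H E' (.rinv l ha) hb) y h2⟩
  | rbox l a iha =>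
    intro hQE H x hx
    simp only [mtr]
    split
    · next hs => exact H _ (.refl _) hs hx
    · intro y hy
      exact iha (subexp_trans (.rbox l (.refl _)) hQE)
        (fun E' ha hb => H E' (.rbox l ha) hb) y (hx y hy)
  | rfw l a iha =>
    intro hQE H x hx
    have hs : Safe (LExp.rfw l a) := safe_of_rfw_subexp hE hQE
    simp only [mtr, hs, if_pos]
    exact H _ (.refl _) hs hx

/-- S1': under `thetaHat` the modal translation is exact. -/
theorem mtr_den_thetaHat {F : Frame Λ} {L : List (LExp Λ)} (hnd : L.Nodup)
    (hcl : SubClosed L) {g : ℕ → F.W} {E : LExp Λ} (hE : Safe E) (hEL : E ∈ L) :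
    ∀ Q, Subexp Q E → ∀ x, sat F (thetaHat F L g) x (mtr L Q) ↔ x ∈ Q.den F g := by
  intro Q
  induction Q with
  | var i =>
    intro hQE x
    have hm : (LExp.var i : LExp Λ) ∈ L := hcl E hEL _ hQE
    simp [mtr, sat, thetaHat_pEL hnd hm, LExp.den]
  | top => intro _ x; simp [mtr, sat, LExp.den]
  | bot => intro _ x; simp [mtr, sat, LExp.den]
  | inter a b iha ihb =>
    intro hQE x
    have hm : LExp.inter a b ∈ L := hcl E hEL _ hQE
    simp only [mtr]
    split
    · next hs => simp [sat, thetaHat_pEL hnd hm]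
    · have h1 := iha (subexp_trans (.interL (.refl _)) hQE) x
      have h2 := ihb (subexp_trans (.interR (.refl _)) hQE) x
      simp only [sat, LExp.den]
      rw [h1, h2]; rfl
  | union a b iha ihb =>
    intro hQE x
    have hm : LExp.union a b ∈ L := hcl E hEL _ hQE
    simp only [mtr]
    split
    · next hs => simp [sat, thetaHat_pEL hnd hm]
    · have h1 := iha (subexp_trans (.unionL (.refl _)) hQE) x
      have h2 := ihb (subexp_trans (.unionR (.refl _)) hQE) x
      simp only [sat, LExp.den]
      rw [h1, h2]; rfl
  | rinv l a iha =>
    intro hQE x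
    have hm : LExp.rinv l a ∈ L := hcl E hEL _ hQE
    simp only [mtr]
    split
    · next hs => simp [sat, thetaHat_pEL hnd hm]
    · simp only [sat, LExp.den]
      constructor
      · rintro ⟨y, h1, h2⟩
        exact ⟨y, h1, (iha (subexp_trans (.rinv l (.refl _)) hQE) y).1 h2⟩
      · rintro ⟨y, h1, h2⟩
        exact ⟨y, h1, (iha (subexp_trans (.rinv l (.refl _)) hQE) y).2 h2⟩
  | rbox l a iha =>
    intro hQE x
    have hm : LExp.rbox l a ∈ L := hcl E hEL _ hQE
    simp only [mtr]
    split
    · next hs => simp [sat, thetaHat_pEL hnd hm]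
    · simp only [sat, LExp.den]
      constructor
      · intro h y hy
        exact (iha (subexp_trans (.rbox l (.refl _)) hQE) y).1 (h y hy)
      · intro h y hy
        exact (iha (subexp_trans (.rbox l (.refl _)) hQE) y).2 (h y hy)
  | rfw l a iha =>
    intro hQE x
    have hm : LExp.rfw l a ∈ L := hcl E hEL _ hQE
    have hs : Safe (LExp.rfw l a) := safe_of_rfw_subexp hE hQE
    simp only [mtr, hs, if_pos]
    simp [sat, thetaHat_pEL hnd hm]

end P13


set_option autoImplicit false
set_option maxHeartbeats 1000000


attribute [local instance] Classical.propDecidable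

namespace P13

variable {Λ : Type u}

/-! ### the defining regular box-formulas of safe expressions -/

noncomputable def bdf (L : List (LExp Λ)) : LExp Λ → MF Λ (ℕ × ℕ) → MF Λ (ℕ × ℕ)
  | .var _, κ => κ
  | .rfw l a, κ => bdf L a (.box l κ)
  | .inter a b, κ =>
      if SafeFor a then bdf L a (.imp (mtr L b) κ) else bdf L b (.imp (mtr L a) κ)
  | _, κ => κ

noncomputable def sroot : LExp Λ → ℕ
  | .var i => i
  | .rfw _ a => sroot a
  | .inter a b => if SafeFor a then sroot a else sroot b
  | _ => 0

noncomputable def dM (F : Frame Λ) (L : List (LExp Λ)) (θ : ℕ × ℕ → Set F.W) :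
    LExp Λ → F.W → Set F.W
  | .var _, x => {x}
  | .rfw l a, x => Rfwd F l (dM F L θ a x)
  | .inter a b, x =>
      if SafeFor a then dM F L θ a x ∩ {z | sat F θ z (mtr L b)}
      else dM F L θ b x ∩ {z | sat F θ z (mtr L a)}
  | _, _ => ∅

theorem sroot_mem_evars : ∀ {e : LExp Λ}, SafeFor e → sroot e ∈ e.evars := by
  intro e
  induction e with
  | var i => intro _; simp [sroot, LExp.evars]
  | top => intro he; exact absurd he (by intro h; cases h)
  | bot => intro he; exact absurd he (by intro h; cases h)
  | union a b _ _ => intro he; exact absurd he (by intro h; cases h)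
  | rinv l a _ => intro he; exact absurd he (by intro h; cases h)
  | rbox l a _ => intro he; exact absurd he (by intro h; cases h)
  | rfw l a iha =>
    intro he
    have ha : SafeFor a := by cases he; assumption
    simpa [sroot, LExp.evars] using iha ha
  | inter a b iha ihb =>
    intro he
    by_cases hA : SafeFor a
    · simp only [sroot, LExp.evars, hA, if_pos]
      exact Set.mem_union_left _ (iha hA)
    · have hb : SafeFor b := by
        cases he
        · next h => exact absurd h hA
        · assumption
      simp only [sroot, LExp.evars, hA, if_neg, not_false_iff]
      exact Set.mem_union_right _ (ihb hb)

/-- S2: unfolding of the box-formula semantics -/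
theorem bdf_sat_iff {F : Frame Λ} {L : List (LExp Λ)} {θ : ℕ × ℕ → Set F.W}
    {e : LExp Λ} (he : SafeFor e) :
    ∀ (κ : MF Λ (ℕ × ℕ)) (x : F.W),
      sat F θ x (bdf L e κ) ↔ ∀ z ∈ dM F L θ e x, sat F θ z κ := by
  induction e with
  | var i => intro κ x; simp [bdf, dM]
  | top => exact absurd he (by intro h; cases h)
  | bot => exact absurd he (by intro h; cases h)
  | union a b _ _ => exact absurd he (by intro h; cases h)
  | rinv l a _ => exact absurd he (by intro h; cases h)
  | rbox l a _ => exact absurd he (by intro h; cases h)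
  | rfw l a iha =>
    intro κ x
    have ha : SafeFor a := by cases he; assumption
    simp only [bdf, dM]
    rw [iha ha]
    constructor
    · rintro h z ⟨v, hv, hvm⟩
      exact h v hvm z hv
    · intro h z hz y hy
      exact h y ⟨z, hy, hz⟩
  | inter a b iha ihb =>
    intro κ x
    by_cases hA : SafeFor a
    · simp only [bdf, dM, hA, if_pos]
      rw [iha hA]
      constructor
      · rintro h z ⟨hz1, hz2⟩
        exact h z hz1 hz2
      · intro h z hz hz2
        exact h z ⟨hz, hz2⟩
    · have hb : SafeFor b := by
        cases he
        · next h => exact absurd h hA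
        · assumption
      simp only [bdf, dM, hA, if_neg, not_false_iff]
      rw [ihb hb]
      constructor
      · rintro h z ⟨hz1, hz2⟩
        exact h z hz1 hz2
      · intro h z hz hz2
        exact h z ⟨hz, hz2⟩

/-- den is below dM, given the inductive hypothesis on smaller safe expressions. -/
theorem den_sub_dM {F : Frame Λ} {L : List (LExp Λ)} {θ : ℕ × ℕ → Set F.W} {g : ℕ → F.W}
    {E : LExp Λ} (hE : Safe E)
    (HH : ∀ E', Subexp E' E → Safe E' → esz E' < esz E → E'.den F g ⊆ θ (pEL L E')) :
    ∀ e, SafeFor e → Subexp e E → e.den F g ⊆ dM F L θ e (g (sroot e)) := by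
  intro e
  induction e with
  | var i => intro _ _ x hx; simpa [dM, sroot, LExp.den] using hx
  | top => intro he; exact absurd he (by intro h; cases h)
  | bot => intro he; exact absurd he (by intro h; cases h)
  | union a b _ _ => intro he; exact absurd he (by intro h; cases h)
  | rinv l a _ => intro he; exact absurd he (by intro h; cases h)
  | rbox l a _ => intro he; exact absurd he (by intro h; cases h)
  | rfw l a iha =>
    intro he hsub x hx
    have ha : SafeFor a := by cases he; assumption
    obtain ⟨v, hv1, hv2⟩ := hx
    exact ⟨v, hv1, iha ha (subexp_trans (.rfw l (.refl _)) hsub) hv2⟩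
  | inter a b iha ihb =>
    intro he hsub x hx
    have hlt : esz b < esz E ∧ esz a < esz E := by
      have h1 := subexp_esz_le hsub
      constructor <;> [skip; skip] <;>
        · simp only [esz] at h1 ⊢
          omega
    by_cases hA : SafeFor a
    · simp only [dM, sroot, hA, if_pos]
      refine ⟨iha hA (subexp_trans (.interL (.refl _)) hsub) hx.1, ?_⟩
      exact den_sub_mtr hE b (subexp_trans (.interR (.refl _)) hsub)
        (fun E' h1 h2 => HH E' (subexp_trans h1 (subexp_trans (.interR (.refl _)) hsub)) h2
          (lt_of_le_of_lt (subexp_esz_le h1) hlt.1)) x hx.2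
    · have hb : SafeFor b := by
        cases he
        · next h => exact absurd h hA
        · assumption
      simp only [dM, sroot, hA, if_neg, not_false_iff]
      refine ⟨ihb hb (subexp_trans (.interR (.refl _)) hsub) hx.2, ?_⟩
      exact den_sub_mtr hE a (subexp_trans (.interL (.refl _)) hsub)
        (fun E' h1 h2 => HH E' (subexp_trans h1 (subexp_trans (.interL (.refl _)) hsub)) h2
          (lt_of_le_of_lt (subexp_esz_le h1) hlt.2)) x hx.1

/-- dM under thetaHat is below den. -/
theorem dM_thetaHat_sub_den {F : Frame Λ} {L : List (LExp Λ)} (hnd : L.Nodup)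
    (hcl : SubClosed L) {g : ℕ → F.W} {E : LExp Λ} (hE : Safe E) (hEL : E ∈ L) :
    ∀ e, SafeFor e → Subexp e E →
      dM F L (thetaHat F L g) e (g (sroot e)) ⊆ e.den F g := by
  intro e
  induction e with
  | var i => intro _ _ x hx; simpa [dM, sroot, LExp.den] using hx
  | top => intro he; exact absurd he (by intro h; cases h)
  | bot => intro he; exact absurd he (by intro h; cases h)
  | union a b _ _ => intro he; exact absurd he (by intro h; cases h)
  | rinv l a _ => intro he; exact absurd he (by intro h; cases h)
  | rbox l a _ => intro he; exact absurd he (by intro h; cases h)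
  | rfw l a iha =>
    intro he hsub x hx
    have ha : SafeFor a := by cases he; assumption
    obtain ⟨v, hv1, hv2⟩ := hx
    exact ⟨v, hv1, iha ha (subexp_trans (.rfw l (.refl _)) hsub) hv2⟩
  | inter a b iha ihb =>
    intro he hsub x hx
    by_cases hA : SafeFor a
    · simp only [dM, sroot, hA, if_pos] at hx ⊢
      refine ⟨iha hA (subexp_trans (.interL (.refl _)) hsub) hx.1, ?_⟩
      exact (mtr_den_thetaHat hnd hcl hE hEL b
        (subexp_trans (.interR (.refl _)) hsub) x).1 hx.2
    · have hb : SafeFor b := by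
        cases he
        · next h => exact absurd h hA
        · assumption
      simp only [dM, sroot, hA, if_neg, not_false_iff] at hx ⊢
      refine ⟨(mtr_den_thetaHat hnd hcl hE hEL a
        (subexp_trans (.interL (.refl _)) hsub) x).1 hx.2, ?_⟩
      exact ihb hb (subexp_trans (.interR (.refl _)) hsub) hx.1

/-- The minimal valuation property: if all defining box-formulas of a
subexpression-closed family `D` of safe expressions hold under `θ`, then `θ` is above
the denotation at each variable of the family. -/
theorem minval {F : Frame Λ} {L : List (LExp Λ)} {θ : ℕ × ℕ → Set F.W} {g : ℕ → F.W}
    {D : List (LExp Λ)}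
    (hDsafe : ∀ E ∈ D, Safe E)
    (hDcl : ∀ E ∈ D, ∀ E', Subexp E' E → Safe E' → E' ∈ D)
    (hsat : ∀ E ∈ D, sat F θ (g (sroot E)) (bdf L E (.var (pEL L E)))) :
    ∀ E ∈ D, E.den F g ⊆ θ (pEL L E) := by
  have main : ∀ n (E : LExp Λ), esz E = n → E ∈ D → E.den F g ⊆ θ (pEL L E) := by
    intro n
    induction n using Nat.strong_induction_on with
    | _ n ih =>
      intro E hn hED
      have hE := hDsafe E hED
      have h2 : ∀ z ∈ dM F L θ E (g (sroot E)), z ∈ θ (pEL L E) := by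
        have := (bdf_sat_iff (L := L) hE.1 (.var (pEL L E)) (g (sroot E))).1 (hsat E hED)
        intro z hz
        exact this z hz
      intro x hx
      refine h2 x ?_
      refine den_sub_dM hE (fun E' h1 h2' h3 => ?_) E hE.1 (.refl _) hx
      exact ih (esz E') (hn ▸ h3) E' rfl (hDcl E hED E' h1 h2')
  intro E hED
  exact main (esz E) E rfl hED

/-- thetaHat satisfies the defining box-formulas of every safe member of `L`. -/
theorem defsat {F : Frame Λ} {L : List (LExp Λ)} (hnd : L.Nodup) (hcl : SubClosed L)
    {g : ℕ → F.W} {E : LExp Λ} (hE : Safe E) (hEL : E ∈ L) :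
    sat F (thetaHat F L g) (g (sroot E)) (bdf L E (.var (pEL L E))) := by
  rw [bdf_sat_iff hE.1]
  intro z hz
  have : z ∈ E.den F g := dM_thetaHat_sub_den hnd hcl hE hEL E hE.1 (.refl _) hz
  show z ∈ thetaHat F L g (pEL L E)
  rwa [thetaHat_pEL hnd hEL]

/-- the defining box-formulas are regular box-formulas -/
theorem regbf_bdf {L : List (LExp Λ)} {E : LExp Λ} :
    ∀ e, SafeFor e → Subexp e E →
      ∀ κ, RegBF Prod.fst κ (pEL L E) → RegBF Prod.fst (bdf L e κ) (pEL L E) := by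
  intro e
  induction e with
  | var i => intro _ _ κ h; exact h
  | top => intro he; exact absurd he (by intro h; cases h)
  | bot => intro he; exact absurd he (by intro h; cases h)
  | union a b _ _ => intro he; exact absurd he (by intro h; cases h)
  | rinv l a _ => intro he; exact absurd he (by intro h; cases h)
  | rbox l a _ => intro he; exact absurd he (by intro h; cases h)
  | rfw l a iha =>
    intro he hsub κ hκ
    have ha : SafeFor a := by cases he; assumption
    exact iha ha (subexp_trans (.rfw l (.refl _)) hsub) _ (.box l hκ)
  | inter a b iha ihb =>
    intro he hsub κ hκ
    have hszb : esz b < esz E := by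
      have := subexp_esz_le hsub
      simp only [esz] at this
      omega
    have hsza : esz a < esz E := by
      have := subexp_esz_le hsub
      simp only [esz] at this
      omega
    by_cases hA : SafeFor a
    · simp only [bdf, hA, if_pos]
      refine iha hA (subexp_trans (.interL (.refl _)) hsub) _ (.imp (mtr_pos L b) ?_ hκ)
      intro q hq
      obtain ⟨E', h1, _, h3⟩ := mtr_vars q hq
      subst h3
      show esz E' < esz E
      exact lt_of_le_of_lt (subexp_esz_le h1) hszb
    · have hb : SafeFor b := by
        cases he
        · next h => exact absurd h hA
        · assumption
      simp only [bdf, hA, if_neg, not_false_iff]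
      refine ihb hb (subexp_trans (.interR (.refl _)) hsub) _ (.imp (mtr_pos L a) ?_ hκ)
      intro q hq
      obtain ⟨E', h1, _, h3⟩ := mtr_vars q hq
      subst h3
      show esz E' < esz E
      exact lt_of_le_of_lt (subexp_esz_le h1) hsza

end P13


set_option autoImplicit false
set_option maxHeartbeats 1000000


attribute [local instance] Classical.propDecidable

namespace P13

variable {Λ : Type u}

/-! ### clauses -/

abbrev Lit (Λ : Type u) := ℕ × MF Λ (ℕ × ℕ)
abbrev Edge (Λ : Type u) := ℕ × Λ × ℕ

def ysOf (es : List (Edge Λ)) : List ℕ := es.map (·.1)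

def LitSem (F : Frame Λ) (L : List (LExp Λ)) (g : ℕ → F.W) (p : Lit Λ) : Prop :=
  sat F (thetaHat F L g) (g p.1) p.2

def LitsSem (F : Frame Λ) (L : List (LExp Λ)) (lits : List (Lit Λ)) (g : ℕ → F.W) : Prop :=
  ∃ p ∈ lits, LitSem F L g p

def ClSemK (F : Frame Λ) : List (Edge Λ) → ((ℕ → F.W) → Prop) → (ℕ → F.W) → Prop
  | [], k, g => k g
  | (y, l, x) :: es, k, g => ∀ u, F.R l (g x) u → ClSemK F es k (Function.update g y u)

def ClSem (F : Frame Λ) (L : List (LExp Λ)) (es : List (Edge Λ)) (lits : List (Lit Λ))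
    (g : ℕ → F.W) : Prop :=
  ClSemK F es (LitsSem F L lits) g

def EdgesWF : Set ℕ → List (Edge Λ) → Prop
  | _, [] => True
  | U, (y, _, x) :: es => x ∈ U ∧ y ∉ U ∧ EdgesWF (insert y U) es

def compatE (F : Frame Λ) (g : ℕ → F.W) (es : List (Edge Λ)) : Prop :=
  ∀ e ∈ es, F.R e.2.1 (g e.2.2) (g e.1)

def LitOK (L : List (LExp Λ)) (U : Set ℕ) (p : Lit Λ) : Prop :=
  p.1 ∈ U ∧ Positive p.2 ∧
    ∀ q ∈ MF.vars p.2, ∃ E : LExp Λ, E ∈ L ∧ Safe E ∧ E.evars ⊆ U ∧ q = pEL L E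

theorem edgeswf_mono {U U' : Set ℕ} {es : List (Edge Λ)} (h : EdgesWF U es)
    (hUU : U ⊆ U') (hys : ∀ y ∈ ysOf es, y ∉ U' \ U) : EdgesWF U' es := by
  induction es generalizing U U' with
  | nil => trivial
  | cons e es ih =>
    obtain ⟨y, l, x⟩ := e
    obtain ⟨h1, h2, h3⟩ := h
    refine ⟨hUU h1, fun hy => ?_, ?_⟩
    · exact hys y (by simp [ysOf]) ⟨hy, h2⟩
    · refine ih h3 (Set.insert_subset_insert hUU) ?_
      intro z hz ⟨hz1, hz2⟩
      rcases hz1 with rfl | hz1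
      · exact hz2 (Set.mem_insert _ _)
      · exact hys z (by simp [ysOf]; right; exact (by simpa [ysOf] using hz)) ⟨hz1, fun hU => hz2 (Set.mem_insert_iff.2 (Or.inr hU))⟩

theorem edgeswf_ys_not_U {U : Set ℕ} {es : List (Edge Λ)} (h : EdgesWF U es) :
    ∀ y ∈ ysOf es, y ∉ U := by
  induction es generalizing U with
  | nil => intro y hy; cases hy
  | cons e es ih =>
    obtain ⟨y, l, x⟩ := e
    obtain ⟨h1, h2, h3⟩ := h
    intro z hz
    simp only [ysOf, List.map_cons, List.mem_cons] at hz
    rcases hz with rfl | hz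
    · exact h2
    · intro hU
      exact ih h3 z (by simpa [ysOf] using hz) (Set.mem_insert_iff.2 (Or.inr hU))

/-! ### congruence lemmas -/

theorem litsem_congr {F : Frame Λ} {L : List (LExp Λ)} {U : Set ℕ} {g g' : ℕ → F.W}
    {p : Lit Λ} (hp : LitOK L U p) (hg : ∀ v ∈ U, g v = g' v) :
    LitSem F L g p ↔ LitSem F L g' p := by
  obtain ⟨h1, _, h3⟩ := hp
  unfold LitSem
  rw [hg p.1 h1]
  apply sat_congr
  intro q hq
  obtain ⟨E, hE1, _, hE3, rfl⟩ := h3 q hq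
  apply thetaHat_congr
  intro hp' i hi
  have : L.get ⟨(pEL L E).2, hp'⟩ = E := idxL_get hE1 hp'
  rw [this] at hi
  exact hg i (hE3 hi)

theorem litssem_congr {F : Frame Λ} {L : List (LExp Λ)} {U : Set ℕ} {g g' : ℕ → F.W}
    {lits : List (Lit Λ)} (hl : ∀ p ∈ lits, LitOK L U p) (hg : ∀ v ∈ U, g v = g' v) :
    LitsSem F L lits g ↔ LitsSem F L lits g' := by
  unfold LitsSem
  exact exists_congr fun p => and_congr_right fun hp => litsem_congr (hl p hp) hg

theorem clsemK_append {F : Frame Λ} (es1 es2 : List (Edge Λ)) (k : (ℕ → F.W) → Prop) :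
    ∀ g, ClSemK F (es1 ++ es2) k g ↔ ClSemK F es1 (fun g' => ClSemK F es2 k g') g := by
  induction es1 with
  | nil => intro g; rfl
  | cons e es ih =>
    obtain ⟨y, l, x⟩ := e
    intro g
    exact forall_congr' fun u => imp_congr_right fun _ => ih _

theorem clsemK_congr {F : Frame Λ} {k k' : (ℕ → F.W) → Prop} (es : List (Edge Λ))
    (h : ∀ g', k g' ↔ k' g') : ∀ g, ClSemK F es k g ↔ ClSemK F es k' g := by
  induction es with
  | nil => intro g; exact h g
  | cons e es ih =>
    obtain ⟨y, l, x⟩ := e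
    intro g
    exact forall_congr' fun u => imp_congr_right fun _ => ih _

theorem clsemK_or {F : Frame Λ} {k Q : (ℕ → F.W) → Prop} (es : List (Edge Λ))
    (hQ : ∀ g' y u, y ∈ ysOf es → (Q (Function.update g' y u) ↔ Q g')) :
    ∀ g, ClSemK F es (fun g' => k g' ∨ Q g') g ↔ (ClSemK F es k g ∨ Q g) := by
  induction es with
  | nil => intro g; rfl
  | cons e es ih =>
    obtain ⟨y, l, x⟩ := e
    intro g
    constructor
    · intro h
      by_cases hQg : Q g
      · exact Or.inr hQg
      · refine Or.inl fun u hu => ?_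
        have := (ih (fun g' y' u' hy' => hQ g' y' u' (by simp [ysOf]; right; simpa [ysOf] using hy')) (Function.update g y u)).1 (h u hu)
        rcases this with h' | h'
        · exact h'
        · exact absurd ((hQ g y u (by simp [ysOf])).1 h') hQg
    · intro h u hu
      rcases h with h | h
      · exact (ih (fun g' y' u' hy' => hQ g' y' u' (by simp [ysOf]; right; simpa [ysOf] using hy')) _).2 (Or.inl (h u hu))
      · exact (ih (fun g' y' u' hy' => hQ g' y' u' (by simp [ysOf]; right; simpa [ysOf] using hy')) _).2
          (Or.inr ((hQ g y u (by simp [ysOf])).2 h))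

theorem clsem_g_congr {F : Frame Λ} {L : List (LExp Λ)} {lits : List (Lit Λ)} :
    ∀ (es : List (Edge Λ)) (U : Set ℕ) (g g' : ℕ → F.W), EdgesWF U es →
      (∀ p ∈ lits, LitOK L (U ∪ {v | v ∈ ysOf es}) p) →
      (∀ v ∈ U, g v = g' v) →
      (ClSem F L es lits g ↔ ClSem F L es lits g') := by
  intro es
  induction es with
  | nil =>
    intro U g g' _ hl hg
    refine litssem_congr (fun p hp => ?_) hg
    have := hl p hp
    simpa [ysOf] using this
  | cons e es ih =>
    obtain ⟨y, l, x⟩ := e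
    intro U g g' hwf hl hg
    obtain ⟨h1, h2, h3⟩ := hwf
    unfold ClSem ClSemK
    rw [hg x h1]
    refine forall_congr' fun u => imp_congr_right fun _ => ?_
    refine ih (insert y U) _ _ h3 (fun p hp => ?_) ?_
    · have := hl p hp
      have hset : U ∪ {v | v ∈ ysOf ((y, l, x) :: es)} = insert y U ∪ {v | v ∈ ysOf es} := by
        simp only [ysOf, List.map_cons]
        ext a
        simp [Set.mem_insert_iff, or_comm, or_left_comm, or_assoc]
      rwa [hset] at this
    · intro v hv
      rcases hv with rfl | hv
      · simp [Function.update]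
      · simp only [Function.update]
        split
        · next hh => subst hh; exact absurd hv h2
        · exact hg v hv

/-- merging two clauses computes disjunction -/
theorem clsem_merge {F : Frame Λ} {L : List (LExp Λ)} {U : Set ℕ}
    {es1 es2 : List (Edge Λ)} {lits1 lits2 : List (Lit Λ)}
    (h1 : EdgesWF U es1) (h2 : EdgesWF U es2)
    (hl1 : ∀ p ∈ lits1, LitOK L (U ∪ {v | v ∈ ysOf es1}) p)
    (hl2 : ∀ p ∈ lits2, LitOK L (U ∪ {v | v ∈ ysOf es2}) p)
    (hdisj : ∀ y ∈ ysOf es1, y ∉ ysOf es2) :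
    ∀ g, ClSem F L (es1 ++ es2) (lits1 ++ lits2) g ↔
      (ClSem F L es1 lits1 g ∨ ClSem F L es2 lits2 g) := by
  intro g
  have inner : ∀ g', ClSemK F es2 (LitsSem F L (lits1 ++ lits2)) g' ↔
      (LitsSem F L lits1 g' ∨ ClSem F L es2 lits2 g') := by
    intro g'
    have e1 : ∀ g'' : ℕ → F.W, LitsSem F L (lits1 ++ lits2) g'' ↔
        (LitsSem F L lits2 g'' ∨ LitsSem F L lits1 g'') := by
      intro g''
      simp only [LitsSem, List.mem_append]
      constructor
      · rintro ⟨p, (h | h), hs⟩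
        · exact Or.inr ⟨p, h, hs⟩
        · exact Or.inl ⟨p, h, hs⟩
      · rintro (⟨p, h, hs⟩ | ⟨p, h, hs⟩)
        · exact ⟨p, Or.inr h, hs⟩
        · exact ⟨p, Or.inl h, hs⟩
    have hQ : ∀ (g'' : ℕ → F.W) y u, y ∈ ysOf es2 →
        (LitsSem F L lits1 (Function.update g'' y u) ↔ LitsSem F L lits1 g'') := by
      intro g'' y u hy
      refine litssem_congr hl1 ?_
      intro v hv
      have hvy : v ≠ y := by
        rintro rfl
        rcases hv with hv | hv
        · exact edgeswf_ys_not_U h2 v hy hv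
        · exact hdisj v hv hy
      simp [Function.update, hvy]
    exact ((clsemK_congr es2 e1 g').trans ((clsemK_or es2 hQ g').trans (or_comm)))
  have hQ2 : ∀ (g' : ℕ → F.W) y u, y ∈ ysOf es1 →
      (ClSem F L es2 lits2 (Function.update g' y u) ↔ ClSem F L es2 lits2 g') := by
    intro g' y u hy
    refine clsem_g_congr es2 U _ _ h2 hl2 ?_
    intro v hv
    have hvy : v ≠ y := fun h => edgeswf_ys_not_U h1 y hy (h ▸ hv)
    simp [Function.update, hvy]
  exact ((clsemK_append es1 es2 _ g).trans
    ((clsemK_congr es1 inner g).trans (clsemK_or es1 hQ2 g)))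

/-- clause semantics in assignment form -/
theorem clsem_iff_fo {F : Frame Λ} {L : List (LExp Λ)} {es : List (Edge Λ)}
    {lits : List (Lit Λ)} {x₀ : ℕ} (he : EdgesWF {x₀} es)
    (hl : ∀ p ∈ lits, LitOK L ({x₀} ∪ {v | v ∈ ysOf es}) p) (w : F.W) :
    (∀ g : ℕ → F.W, g x₀ = w → ClSem F L es lits g) ↔
      (∀ gg : ℕ → F.W, gg x₀ = w → compatE F gg es → LitsSem F L lits gg) := by
  constructor
  · intro H gg hgg hc
    have main : ∀ (es' : List (Edge Λ)) (g : ℕ → F.W), compatE F g es' →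
        ClSem F L es' lits g → LitsSem F L lits g := by
      intro es'
      induction es' with
      | nil => intro g _ h; exact h
      | cons e es' ih =>
        obtain ⟨y, l, x⟩ := e
        intro g hc' h
        have h1 := h (g y) (hc' (y, l, x) (by simp))
        rw [Function.update_eq_self] at h1
        exact ih g (fun e he' => hc' e (List.mem_cons_of_mem _ he')) h1
    exact main es gg hc (H gg hgg)
  · intro H g hg
    have main : ∀ (es' : List (Edge Λ)) (U : Set ℕ) (g' : ℕ → F.W), EdgesWF U es' →
        (∀ gg : ℕ → F.W, (∀ v ∈ U, gg v = g' v) → compatE F gg es' → LitsSem F L lits gg) →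
        ClSem F L es' lits g' := by
      intro es'
      induction es' with
      | nil =>
        intro U g' _ H'
        exact H' g' (fun _ _ => rfl) (fun e he => by cases he)
      | cons e es' ih =>
        obtain ⟨y, l, x⟩ := e
        intro U g' hwf H'
        obtain ⟨h1, h2, h3⟩ := hwf
        intro u hu
        refine ih (insert y U) _ h3 ?_
        intro gg hgg hc
        refine H' gg (fun v hv => ?_) ?_
        · have hvy : v ≠ y := fun h => h2 (h ▸ hv)
          have := hgg v (Set.mem_insert_iff.2 (Or.inr hv))
          rwa [Function.update, dif_neg hvy] at this
        · intro e he'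
          rcases List.mem_cons.1 he' with rfl | he'
          · show F.R l (gg x) (gg y)
            have hx : gg x = g' x := by
              have hxy : x ≠ y := fun h => h2 (h ▸ h1)
              have := hgg x (Set.mem_insert_iff.2 (Or.inr h1))
              rwa [Function.update, dif_neg hxy] at this
            have hy : gg y = u := by
              have := hgg y (Set.mem_insert _ _)
              rwa [Function.update, dif_pos rfl] at this
            rw [hx, hy]
            exact hu
          · exact hc e he'
    refine main es {x₀} g he ?_
    intro gg hgg hc
    exact H gg (by rw [hgg x₀ rfl, hg]) hc

end P13


set_option autoImplicit false
set_option maxHeartbeats 1000000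


attribute [local instance] Classical.propDecidable

namespace P13

variable {Λ : Type u}

/-! ### finite conjunctions -/

def listAnd (ls : List (MF Λ (ℕ × ℕ))) : MF Λ (ℕ × ℕ) := ls.foldr .and (.neg .bot)

theorem sat_listAnd {F : Frame Λ} (θ : ℕ × ℕ → Set F.W) (x : F.W) :
    ∀ ls : List (MF Λ (ℕ × ℕ)), sat F θ x (listAnd ls) ↔ ∀ φ ∈ ls, sat F θ x φ := by
  intro ls
  induction ls with
  | nil => simp [listAnd, sat]
  | cons φ ls ih =>
    show sat F θ x φ ∧ sat F θ x (listAnd ls) ↔ _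
    rw [ih]
    simp

theorem gsant_listAnd {ls : List (MF Λ (ℕ × ℕ))} (h : ∀ φ ∈ ls, GSAnt φ) :
    GSAnt (listAnd ls) := by
  induction ls with
  | nil => exact .neg .bot
  | cons φ ls ih =>
    exact .and (h φ (by simp)) (ih fun ψ hψ => h ψ (List.mem_cons_of_mem _ hψ))

/-! ### the defining expressions of a clause -/

noncomputable def defsOf (L : List (LExp Λ)) (lits : List (Lit Λ)) : List (LExp Λ) :=
  (lits.flatMap fun p => mvarList p.2).flatMap fun q =>
    if h : q.2 < L.length then (subL (L.get ⟨q.2, h⟩)).filter (fun E => Safe E) else []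

theorem defsOf_safe {L : List (LExp Λ)} {lits : List (Lit Λ)} {E : LExp Λ}
    (h : E ∈ defsOf L lits) : Safe E := by
  simp only [defsOf, List.mem_flatMap] at h
  obtain ⟨q, _, hq⟩ := h
  split at hq
  · rw [List.mem_filter] at hq
    exact of_decide_eq_true hq.2
  · cases hq

theorem defsOf_spec {L : List (LExp Λ)} {lits : List (Lit Λ)} {E : LExp Λ}
    (h : E ∈ defsOf L lits) :
    ∃ (q : ℕ × ℕ) (hq : q.2 < L.length), Subexp E (L.get ⟨q.2, hq⟩) ∧
      (∃ p ∈ lits, q ∈ MF.vars p.2) := by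
  simp only [defsOf, List.mem_flatMap] at h
  obtain ⟨q, hq1, hq⟩ := h
  obtain ⟨p, hp1, hp2⟩ := hq1
  split at hq
  · next hlt =>
    rw [List.mem_filter] at hq
    exact ⟨q, hlt, mem_subL_iff.1 hq.1, p, hp1, mem_mvarList_iff.1 hp2⟩
  · cases hq

theorem defsOf_mem_L {L : List (LExp Λ)} (hcl : SubClosed L) {lits : List (Lit Λ)}
    {E : LExp Λ} (h : E ∈ defsOf L lits) : E ∈ L := by
  obtain ⟨q, hq, hsub, _⟩ := defsOf_spec h
  exact hcl _ (L.get_mem _) _ hsub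

theorem defsOf_evars {L : List (LExp Λ)} {U : Set ℕ} {lits : List (Lit Λ)}
    (hl : ∀ p ∈ lits, LitOK L U p) {E : LExp Λ} (h : E ∈ defsOf L lits) :
    E.evars ⊆ U := by
  obtain ⟨q, hq, hsub, p, hp, hqv⟩ := defsOf_spec h
  obtain ⟨E₀, hE1, _, hE3, rfl⟩ := (hl p hp).2.2 q hqv
  have hget : L.get ⟨(pEL L E₀).2, hq⟩ = E₀ := idxL_get hE1 hq
  rw [hget] at hsub
  exact (subexp_evars_subset hsub).trans hE3

theorem defsOf_closed {L : List (LExp Λ)} {lits : List (Lit Λ)} {E E' : LExp Λ}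
    (h : E ∈ defsOf L lits) (hsub : Subexp E' E) (hs : Safe E') : E' ∈ defsOf L lits := by
  simp only [defsOf, List.mem_flatMap] at h ⊢
  obtain ⟨q, hq1, hq⟩ := h
  refine ⟨q, hq1, ?_⟩
  split at hq
  · next hlt =>
    rw [List.mem_filter] at hq
    simp only [hlt, dif_pos]
    rw [List.mem_filter]
    exact ⟨mem_subL_iff.2 (subexp_trans hsub (mem_subL_iff.1 hq.1)), decide_eq_true hs⟩
  · cases hq

theorem defsOf_covers {L : List (LExp Λ)} (hnd : L.Nodup) {U : Set ℕ} {lits : List (Lit Λ)}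
    (hl : ∀ p ∈ lits, LitOK L U p) {p : Lit Λ} (hp : p ∈ lits) {q : ℕ × ℕ}
    (hq : q ∈ MF.vars p.2) : ∃ E₀, q = pEL L E₀ ∧ E₀ ∈ defsOf L lits := by
  obtain ⟨E₀, hE1, hE2, _, rfl⟩ := (hl p hp).2.2 q hq
  refine ⟨E₀, rfl, ?_⟩
  simp only [defsOf, List.mem_flatMap]
  refine ⟨pEL L E₀, ⟨p, hp, mem_mvarList_iff.2 hq⟩, ?_⟩
  have hlt : (pEL L E₀).2 < L.length := idxL_lt hE1
  rw [dif_pos hlt]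
  rw [List.mem_filter]
  have hget : L.get ⟨(pEL L E₀).2, hlt⟩ = E₀ := idxL_get hE1 hlt
  rw [hget]
  exact ⟨mem_subL_iff.2 (.refl _), decide_eq_true hE2⟩

/-! ### node formulas -/

noncomputable def NodeF (L : List (LExp Λ)) (lits : List (Lit Λ)) (Ds : List (LExp Λ))
    (v : ℕ) : MF Λ (ℕ × ℕ) :=
  .and (listAnd ((Ds.filter fun E => sroot E = v).map fun E => bdf L E (.var (pEL L E))))
       (listAnd ((lits.filter fun p => p.1 = v).map fun p => .neg p.2))

theorem sat_NodeF {F : Frame Λ} {L : List (LExp Λ)} {lits : List (Lit Λ)}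
    {Ds : List (LExp Λ)} {θ : ℕ × ℕ → Set F.W} {x : F.W} {v : ℕ} :
    sat F θ x (NodeF L lits Ds v) ↔
      ((∀ E ∈ Ds, sroot E = v → sat F θ x (bdf L E (.var (pEL L E)))) ∧
       (∀ p ∈ lits, p.1 = v → ¬ sat F θ x p.2)) := by
  show (sat F θ x _ ∧ sat F θ x _) ↔ _
  rw [sat_listAnd, sat_listAnd]
  constructor
  · rintro ⟨h1, h2⟩
    constructor
    · intro E hE hr
      exact h1 _ (List.mem_map.2 ⟨E, List.mem_filter.2 ⟨hE, decide_eq_true hr⟩, rfl⟩)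
    · intro p hp hr
      exact h2 _ (List.mem_map.2 ⟨p, List.mem_filter.2 ⟨hp, decide_eq_true hr⟩, rfl⟩)
  · rintro ⟨h1, h2⟩
    constructor
    · intro φ hφ
      obtain ⟨E, hE, rfl⟩ := List.mem_map.1 hφ
      rw [List.mem_filter] at hE
      exact h1 E hE.1 (of_decide_eq_true hE.2)
    · intro φ hφ
      obtain ⟨p, hp, rfl⟩ := List.mem_map.1 hφ
      rw [List.mem_filter] at hp
      exact h2 p hp.1 (of_decide_eq_true hp.2)

theorem gsant_NodeF {L : List (LExp Λ)} {lits : List (Lit Λ)} {Ds : List (LExp Λ)}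
    (hDs : ∀ E ∈ Ds, Safe E) (hl : ∀ p ∈ lits, Positive p.2) (v : ℕ) :
    GSAnt (NodeF L lits Ds v) := by
  refine .and (gsant_listAnd ?_) (gsant_listAnd ?_)
  · intro φ hφ
    obtain ⟨E, hE, rfl⟩ := List.mem_map.1 hφ
    rw [List.mem_filter] at hE
    refine .reg (p := pEL L E) ?_
    exact regbf_bdf E (hDs E hE.1).1 (.refl _) _ (.var _)
  · intro φ hφ
    obtain ⟨p, hp, rfl⟩ := List.mem_map.1 hφ
    rw [List.mem_filter] at hp
    exact .neg (hl p hp.1)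

/-! ### assembling the antecedent along the edges -/

noncomputable def fstep (e : Edge Λ) (nm : ℕ → MF Λ (ℕ × ℕ)) : ℕ → MF Λ (ℕ × ℕ) :=
  fun v => if v = e.2.2 then .and (nm e.2.2) (.dia e.2.1 (nm e.1)) else nm v

theorem gsant_fold {nm : ℕ → MF Λ (ℕ × ℕ)} (h : ∀ v, GSAnt (nm v)) :
    ∀ (es : List (Edge Λ)) (v : ℕ), GSAnt (List.foldr fstep nm es v) := by
  intro es
  induction es with
  | nil => exact h
  | cons e es ih =>
    intro v
    show GSAnt (fstep e (List.foldr fstep nm es) v)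
    unfold fstep
    split
    · exact .and (ih _) (.dia _ (ih _))
    · exact ih v

theorem buildA_sem {F : Frame Λ} (θ : ℕ × ℕ → Set F.W) (nm : ℕ → MF Λ (ℕ × ℕ)) :
    ∀ (es : List (Edge Λ)) (U : Set ℕ) (g : ℕ → F.W), EdgesWF U es →
      ((∀ v ∈ U, sat F θ (g v) (List.foldr fstep nm es v)) ↔
        ∃ gg : ℕ → F.W, (∀ v ∈ U, gg v = g v) ∧ compatE F gg es ∧
          (∀ v ∈ U, sat F θ (gg v) (nm v)) ∧ ∀ y ∈ ysOf es, sat F θ (gg y) (nm y)) := by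
  intro es
  induction es with
  | nil =>
    intro U g _
    constructor
    · intro h
      refine ⟨g, fun _ _ => rfl, ?_, h, ?_⟩
      · intro e he; cases he
      · intro y hy; cases hy
    · rintro ⟨gg, hagree, _, hsat, _⟩ v hv
      rw [← hagree v hv]
      exact hsat v hv
  | cons e es ih =>
    obtain ⟨y, l, x⟩ := e
    intro U g hwf
    obtain ⟨h1, h2, h3⟩ := hwf
    set F' := List.foldr fstep nm es with hF'
    have hsplit : (∀ v ∈ U, sat F θ (g v) (List.foldr fstep nm ((y, l, x) :: es) v)) ↔
        ((∀ v ∈ U, sat F θ (g v) (F' v)) ∧ ∃ u, F.R l (g x) u ∧ sat F θ u (F' y)) := by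
      show (∀ v ∈ U, sat F θ (g v) (fstep (y, l, x) F' v)) ↔ _
      constructor
      · intro h
        have hx := h x h1
        rw [show fstep (y, l, x) F' x = .and (F' x) (.dia l (F' y)) by simp [fstep]] at hx
        refine ⟨fun v hv => ?_, hx.2⟩
        by_cases hvx : v = x
        · subst hvx; exact hx.1
        · have := h v hv
          rwa [show fstep (y, l, x) F' v = F' v by simp [fstep, hvx]] at this
      · rintro ⟨hA, u, hu1, hu2⟩ v hv
        by_cases hvx : v = x
        · subst hvx
          rw [show fstep (y, l, v) F' v = .and (F' v) (.dia l (F' y)) by simp [fstep]]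
          exact ⟨hA v hv, u, hu1, hu2⟩
        · rw [show fstep (y, l, x) F' v = F' v by simp [fstep, hvx]]
          exact hA v hv
    rw [hsplit]
    have hmid : ((∀ v ∈ U, sat F θ (g v) (F' v)) ∧ ∃ u, F.R l (g x) u ∧ sat F θ u (F' y)) ↔
        (∃ u, F.R l (g x) u ∧
          ∀ v ∈ insert y U, sat F θ (Function.update g y u v) (F' v)) := by
      constructor
      · rintro ⟨hA, u, hu1, hu2⟩
        refine ⟨u, hu1, fun v hv => ?_⟩
        rcases hv with rfl | hv
        · rwa [Function.update_self]
        · have hvy : v ≠ y := fun h => h2 (h ▸ hv)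
          rw [Function.update_of_ne hvy]
          exact hA v hv
      · rintro ⟨u, hu1, hB⟩
        refine ⟨fun v hv => ?_, u, hu1, ?_⟩
        · have hvy : v ≠ y := fun h => h2 (h ▸ hv)
          have := hB v (Set.mem_insert_iff.2 (Or.inr hv))
          rwa [Function.update_of_ne hvy] at this
        · have := hB y (Set.mem_insert _ _)
          rwa [Function.update_self] at this
    rw [hmid]
    constructor
    · rintro ⟨u, hu1, hB⟩
      obtain ⟨gg, hagree, hcomp, hsat, hys⟩ := (ih (insert y U) (Function.update g y u) h3).1 hB
      have hggy : gg y = u := by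
        rw [hagree y (Set.mem_insert _ _), Function.update_self]
      have hggU : ∀ v ∈ U, gg v = g v := by
        intro v hv
        have hvy : v ≠ y := fun h => h2 (h ▸ hv)
        rw [hagree v (Set.mem_insert_iff.2 (Or.inr hv)), Function.update_of_ne hvy]
      refine ⟨gg, hggU, ?_, fun v hv => hsat v (Set.mem_insert_iff.2 (Or.inr hv)), ?_⟩
      · intro e he
        rcases List.mem_cons.1 he with rfl | he
        · show F.R l (gg x) (gg y)
          rw [hggU x h1, hggy]
          exact hu1
        · exact hcomp e he
      · intro z hz
        simp only [ysOf, List.map_cons, List.mem_cons] at hz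
        rcases hz with rfl | hz
        · exact hsat z (Set.mem_insert _ _)
        · exact hys z (by simpa [ysOf] using hz)
    · rintro ⟨gg, hagree, hcomp, hsat, hys⟩
      refine ⟨gg y, ?_, ?_⟩
      · have := hcomp (y, l, x) (by simp)
        rwa [hagree x h1] at this
      · refine (ih (insert y U) (Function.update g y (gg y)) h3).2 ⟨gg, ?_, ?_, ?_, ?_⟩
        · intro v hv
          rcases hv with rfl | hv
          · rw [Function.update_self]
          · have hvy : v ≠ y := fun h => h2 (h ▸ hv)
            rw [Function.update_of_ne hvy]
            exact hagree v hv
        · exact fun e he => hcomp e (List.mem_cons_of_mem _ he)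
        · intro v hv
          rcases hv with rfl | hv
          · exact hys v (by simp [ysOf])
          · exact hsat v hv
        · intro z hz
          exact hys z (by simp [ysOf]; right; simpa [ysOf] using hz)

end P13


set_option autoImplicit false
set_option maxHeartbeats 1000000


attribute [local instance] Classical.propDecidable

namespace P13

variable {Λ : Type u}

/-- KEY: the minimal-valuation equivalence at a fixed assignment. -/
theorem keylem {F : Frame Λ} {L : List (LExp Λ)} (hnd : L.Nodup) (hcl : SubClosed L)
    {lits : List (Lit Λ)} {U : Set ℕ}
    (hl : ∀ p ∈ lits, LitOK L U p) (gg : ℕ → F.W) :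
    (∀ θ : ℕ × ℕ → Set F.W,
        ¬ (∀ v ∈ U, sat F θ (gg v) (NodeF L lits (defsOf L lits) v))) ↔
      LitsSem F L lits gg := by
  constructor
  · intro H
    by_contra hLS
    refine H (thetaHat F L gg) fun v hv => ?_
    rw [sat_NodeF]
    constructor
    · intro E hE hr
      have h1 := defsat hnd hcl (defsOf_safe hE) (defsOf_mem_L hcl hE) (g := gg)
      rwa [hr] at h1
    · intro p hp hr hsat
      refine hLS ⟨p, hp, ?_⟩
      show sat F (thetaHat F L gg) (gg p.1) p.2
      rwa [hr]
  · rintro ⟨p, hp, hps⟩ θ hn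
    have hdef : ∀ E ∈ defsOf L lits, sat F θ (gg (sroot E)) (bdf L E (.var (pEL L E))) := by
      intro E hE
      have hroot : sroot E ∈ U := defsOf_evars hl hE (sroot_mem_evars (defsOf_safe hE).1)
      exact ((sat_NodeF).1 (hn _ hroot)).1 E hE rfl
    have hmin : ∀ E ∈ defsOf L lits, E.den F gg ⊆ θ (pEL L E) :=
      minval (fun E hE => defsOf_safe hE) (fun E hE E' h1 h2 => defsOf_closed hE h1 h2) hdef
    have hmono : sat F θ (gg p.1) p.2 := by
      refine sat_mono (hl p hp).2.1 (fun q hq => ?_) (gg p.1) hps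
      obtain ⟨E₁, rfl, hE₁⟩ := defsOf_covers hnd hl hp hq
      rw [thetaHat_pEL hnd (defsOf_mem_L hcl hE₁)]
      exact hmin E₁ hE₁
    have := ((sat_NodeF).1 (hn p.1 (hl p hp).1)).2 p hp rfl
    exact this hmono

/-- PHASE 2: each clause is the local correspondent of a generalized Sahlqvist
implication. -/
theorem clauseGS (L : List (LExp Λ)) (hnd : L.Nodup) (hcl : SubClosed L)
    (es : List (Edge Λ)) (lits : List (Lit Λ)) (x₀ : ℕ)
    (he : EdgesWF {x₀} es)
    (hl : ∀ p ∈ lits, LitOK L ({x₀} ∪ {v | v ∈ ysOf es}) p) :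
    ∃ A : MF Λ (ℕ × ℕ), GSAnt A ∧ ∀ (F : Frame Λ) (w : F.W),
      (∀ θ : ℕ × ℕ → Set F.W, sat F θ w (.imp A .bot)) ↔
        (∀ g : ℕ → F.W, g x₀ = w → ClSem F L es lits g) := by
  classical
  set Ds := defsOf L lits with hDs
  set nm := NodeF L lits Ds with hnm
  refine ⟨List.foldr fstep nm es x₀, ?_, ?_⟩
  · refine gsant_fold (fun v => ?_) es x₀
    exact gsant_NodeF (fun E hE => defsOf_safe hE) (fun p hp => (hl p hp).2.1) v
  · intro F w
    rw [clsem_iff_fo he hl w]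
    have hone : ∀ θ : ℕ × ℕ → Set F.W,
        sat F θ w (List.foldr fstep nm es x₀) ↔
        ∃ gg : ℕ → F.W, gg x₀ = w ∧ compatE F gg es ∧
          ((∀ v ∈ ({x₀} ∪ {v | v ∈ ysOf es} : Set ℕ), sat F θ (gg v) (nm v))) := by
      intro θ
      have := buildA_sem θ nm es {x₀} (fun _ => w) he
      constructor
      · intro h
        obtain ⟨gg, ha, hc, hs1, hs2⟩ := this.1 (by
          intro v hv
          rcases hv with rfl
          exact h)
        refine ⟨gg, ha x₀ rfl, hc, ?_⟩
        intro v hv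
        rcases hv with rfl | hv
        · exact hs1 v rfl
        · exact hs2 v hv
      · rintro ⟨gg, hgg, hc, hs⟩
        have := this.2 ⟨gg, ?_, hc, ?_, ?_⟩
        · exact this x₀ rfl
        · intro v hv; rcases hv with rfl; exact hgg
        · intro v hv; rcases hv with rfl; exact hs v (Or.inl rfl)
        · intro y hy; exact hs y (Or.inr hy)
    constructor
    · intro H gg hgg hc
      rw [← keylem hnd hcl hl gg]
      intro θ hsat
      have h1 : sat F θ w (MF.imp (List.foldr fstep nm es x₀) .bot) := H θ
      refine h1 ((hone θ).2 ⟨gg, hgg, hc, hsat⟩)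
    · intro H θ
      show sat F θ w (List.foldr fstep nm es x₀) → False
      intro hsat
      obtain ⟨gg, hgg, hc, hs⟩ := (hone θ).1 hsat
      have := (keylem hnd hcl hl gg).2 (H gg hgg hc) θ
      exact this hs

end P13


set_option autoImplicit false
set_option maxHeartbeats 1000000


attribute [local instance] Classical.propDecidable

namespace P13

variable {Λ : Type u}

/-! ### positive finite conjunctions/disjunctions of modal formulas -/

def mAnd (ls : List (MF Λ (ℕ × ℕ))) : MF Λ (ℕ × ℕ) := ls.foldr .and .top
def mOr (ls : List (MF Λ (ℕ × ℕ))) : MF Λ (ℕ × ℕ) := ls.foldr .or .bot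

theorem sat_mAnd {F : Frame Λ} (θ : ℕ × ℕ → Set F.W) (x : F.W) (ls : List (MF Λ (ℕ × ℕ))) :
    sat F θ x (mAnd ls) ↔ ∀ φ ∈ ls, sat F θ x φ := by
  induction ls with
  | nil => simp [mAnd, sat]
  | cons φ ls ih => show sat F θ x φ ∧ sat F θ x (mAnd ls) ↔ _; rw [ih]; simp

theorem sat_mOr {F : Frame Λ} (θ : ℕ × ℕ → Set F.W) (x : F.W) (ls : List (MF Λ (ℕ × ℕ))) :
    sat F θ x (mOr ls) ↔ ∃ φ ∈ ls, sat F θ x φ := by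
  induction ls with
  | nil => simp [mOr, sat]
  | cons φ ls ih => show sat F θ x φ ∨ sat F θ x (mOr ls) ↔ _; rw [ih]; simp

theorem mAnd_pos {ls : List (MF Λ (ℕ × ℕ))} (h : ∀ φ ∈ ls, Positive φ) :
    Positive (mAnd ls) := by
  induction ls with
  | nil => exact .top
  | cons φ ls ih => exact .and (h φ (by simp)) (ih fun ψ hψ => h ψ (by simp [hψ]))

theorem mOr_pos {ls : List (MF Λ (ℕ × ℕ))} (h : ∀ φ ∈ ls, Positive φ) :
    Positive (mOr ls) := by
  induction ls with
  | nil => exact .bot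
  | cons φ ls ih => exact .or (h φ (by simp)) (ih fun ψ hψ => h ψ (by simp [hψ]))

theorem mAnd_vars {ls : List (MF Λ (ℕ × ℕ))} {q : ℕ × ℕ} (h : q ∈ MF.vars (mAnd ls)) :
    ∃ φ ∈ ls, q ∈ MF.vars φ := by
  induction ls with
  | nil => simp [mAnd, MF.vars] at h
  | cons φ ls ih =>
    rcases h with h | h
    · exact ⟨φ, by simp, h⟩
    · obtain ⟨ψ, h1, h2⟩ := ih h
      exact ⟨ψ, by simp [h1], h2⟩

theorem mOr_vars {ls : List (MF Λ (ℕ × ℕ))} {q : ℕ × ℕ} (h : q ∈ MF.vars (mOr ls)) :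
    ∃ φ ∈ ls, q ∈ MF.vars φ := by
  induction ls with
  | nil => simp [mOr, MF.vars] at h
  | cons φ ls ih =>
    rcases h with h | h
    · exact ⟨φ, by simp, h⟩
    · obtain ⟨ψ, h1, h2⟩ := ih h
      exact ⟨ψ, by simp [h1], h2⟩

/-! ### combinations of located literals -/

inductive Cmb (Λ : Type u) : Type u
  | lit : Lit Λ → Cmb Λ
  | and : Cmb Λ → Cmb Λ → Cmb Λ
  | or : Cmb Λ → Cmb Λ → Cmb Λ

def CmbSem (F : Frame Λ) (L : List (LExp Λ)) (g : ℕ → F.W) : Cmb Λ → Prop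
  | .lit p => LitSem F L g p
  | .and a b => CmbSem F L g a ∧ CmbSem F L g b
  | .or a b => CmbSem F L g a ∨ CmbSem F L g b

def cmbLits : Cmb Λ → List (Lit Λ)
  | .lit p => [p]
  | .and a b => cmbLits a ++ cmbLits b
  | .or a b => cmbLits a ++ cmbLits b

def toDNF : Cmb Λ → List (List (Lit Λ))
  | .lit p => [[p]]
  | .or a b => toDNF a ++ toDNF b
  | .and a b => (toDNF a).flatMap fun c => (toDNF b).map fun d => c ++ d

def toCNF : Cmb Λ → List (List (Lit Λ))
  | .lit p => [[p]]
  | .and a b => toCNF a ++ toCNF b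
  | .or a b => (toCNF a).flatMap fun c => (toCNF b).map fun d => c ++ d

theorem toDNF_lits {c : Cmb Λ} : ∀ conj ∈ toDNF c, ∀ p ∈ conj, p ∈ cmbLits c := by
  induction c with
  | lit p => intro conj hc q hq; simp [toDNF] at hc; subst hc; simpa [cmbLits] using hq
  | and a b iha ihb =>
    intro conj hc q hq
    simp only [toDNF, List.mem_flatMap, List.mem_map] at hc
    obtain ⟨ca, hca, cb, hcb, rfl⟩ := hc
    simp only [cmbLits, List.mem_append]
    rcases List.mem_append.1 hq with h | h
    · exact Or.inl (iha ca hca q h)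
    · exact Or.inr (ihb cb hcb q h)
  | or a b iha ihb =>
    intro conj hc q hq
    simp only [cmbLits, List.mem_append]
    rcases List.mem_append.1 hc with h | h
    · exact Or.inl (iha conj h q hq)
    · exact Or.inr (ihb conj h q hq)

theorem toCNF_lits {c : Cmb Λ} : ∀ cl ∈ toCNF c, ∀ p ∈ cl, p ∈ cmbLits c := by
  induction c with
  | lit p => intro conj hc q hq; simp [toCNF] at hc; subst hc; simpa [cmbLits] using hq
  | or a b iha ihb =>
    intro conj hc q hq
    simp only [toCNF, List.mem_flatMap, List.mem_map] at hc
    obtain ⟨ca, hca, cb, hcb, rfl⟩ := hc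
    simp only [cmbLits, List.mem_append]
    rcases List.mem_append.1 hq with h | h
    · exact Or.inl (iha ca hca q h)
    · exact Or.inr (ihb cb hcb q h)
  | and a b iha ihb =>
    intro conj hc q hq
    simp only [cmbLits, List.mem_append]
    rcases List.mem_append.1 hc with h | h
    · exact Or.inl (iha conj h q hq)
    · exact Or.inr (ihb conj h q hq)

theorem toDNF_sem {F : Frame Λ} {L : List (LExp Λ)} {g : ℕ → F.W} {c : Cmb Λ} :
    CmbSem F L g c ↔ ∃ conj ∈ toDNF c, ∀ p ∈ conj, LitSem F L g p := by
  induction c with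
  | lit p =>
    simp only [CmbSem, toDNF, List.mem_singleton]
    constructor
    · intro h
      exact ⟨[p], rfl, fun q hq => by rwa [List.mem_singleton.1 hq]⟩
    · rintro ⟨conj, rfl, h⟩
      exact h p (by simp)
  | and a b iha ihb =>
    show (CmbSem F L g a ∧ CmbSem F L g b) ↔ _
    rw [iha, ihb]
    constructor
    · rintro ⟨⟨ca, hca, ha⟩, ⟨cb, hcb, hb⟩⟩
      refine ⟨ca ++ cb, ?_, ?_⟩
      · simp only [toDNF, List.mem_flatMap, List.mem_map]
        exact ⟨ca, hca, cb, hcb, rfl⟩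
      · intro p hp
        rcases List.mem_append.1 hp with h | h
        · exact ha p h
        · exact hb p h
    · rintro ⟨conj, hc, h⟩
      simp only [toDNF, List.mem_flatMap, List.mem_map] at hc
      obtain ⟨ca, hca, cb, hcb, rfl⟩ := hc
      exact ⟨⟨ca, hca, fun p hp => h p (List.mem_append.2 (Or.inl hp))⟩,
        ⟨cb, hcb, fun p hp => h p (List.mem_append.2 (Or.inr hp))⟩⟩
  | or a b iha ihb =>
    show (CmbSem F L g a ∨ CmbSem F L g b) ↔ _
    rw [iha, ihb]
    constructor
    · rintro (⟨ca, hca, ha⟩ | ⟨cb, hcb, hb⟩)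
      · exact ⟨ca, List.mem_append.2 (Or.inl hca), ha⟩
      · exact ⟨cb, List.mem_append.2 (Or.inr hcb), hb⟩
    · rintro ⟨conj, hc, h⟩
      rcases List.mem_append.1 hc with hm | hm
      · exact Or.inl ⟨conj, hm, h⟩
      · exact Or.inr ⟨conj, hm, h⟩

theorem toCNF_sem {F : Frame Λ} {L : List (LExp Λ)} {g : ℕ → F.W} {c : Cmb Λ} :
    CmbSem F L g c ↔ ∀ cl ∈ toCNF c, ∃ p ∈ cl, LitSem F L g p := by
  induction c with
  | lit p =>
    simp only [CmbSem, toCNF, List.mem_singleton]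
    constructor
    · intro h
      rintro cl rfl
      exact ⟨p, by simp, h⟩
    · intro h
      obtain ⟨q, hq, hqs⟩ := h [p] rfl
      rwa [← List.mem_singleton.1 hq]
  | and a b iha ihb =>
    show (CmbSem F L g a ∧ CmbSem F L g b) ↔ _
    rw [iha, ihb]
    constructor
    · rintro ⟨ha, hb⟩ cl hcl
      rcases List.mem_append.1 hcl with h | h
      · exact ha cl h
      · exact hb cl h
    · intro h
      exact ⟨fun cl hcl => h cl (List.mem_append.2 (Or.inl hcl)),
        fun cl hcl => h cl (List.mem_append.2 (Or.inr hcl))⟩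
  | or a b iha ihb =>
    show (CmbSem F L g a ∨ CmbSem F L g b) ↔ _
    rw [iha, ihb]
    constructor
    · rintro (ha | hb) cl hcl
      · simp only [toCNF, List.mem_flatMap, List.mem_map] at hcl
        obtain ⟨ca, hca, cb, hcb, rfl⟩ := hcl
        obtain ⟨p, hp, hps⟩ := ha ca hca
        exact ⟨p, List.mem_append.2 (Or.inl hp), hps⟩
      · simp only [toCNF, List.mem_flatMap, List.mem_map] at hcl
        obtain ⟨ca, hca, cb, hcb, rfl⟩ := hcl
        obtain ⟨p, hp, hps⟩ := hb cb hcb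
        exact ⟨p, List.mem_append.2 (Or.inr hp), hps⟩
    · intro h
      by_cases ha : ∀ ca ∈ toCNF a, ∃ p ∈ ca, LitSem F L g p
      · exact Or.inl ha
      · push_neg at ha
        obtain ⟨ca, hca, hano⟩ := ha
        refine Or.inr fun cb hcb => ?_
        have := h (ca ++ cb) (by
          simp only [toCNF, List.mem_flatMap, List.mem_map]
          exact ⟨ca, hca, cb, hcb, rfl⟩)
        obtain ⟨p, hp, hps⟩ := this
        rcases List.mem_append.1 hp with hm | hm
        · exact absurd hps (hano p hm)
        · exact ⟨p, hm, hps⟩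

end P13


set_option autoImplicit false
set_option maxHeartbeats 1000000


attribute [local instance] Classical.propDecidable

namespace P13

variable {Λ : Type u}

def cAnd (x : ℕ) (ls : List (Cmb Λ)) : Cmb Λ := ls.foldr .and (.lit (x, .top))
def cOr (x : ℕ) (ls : List (Cmb Λ)) : Cmb Λ := ls.foldr .or (.lit (x, .bot))

theorem cAnd_sem {F : Frame Λ} {L : List (LExp Λ)} {g : ℕ → F.W} {x : ℕ}
    {ls : List (Cmb Λ)} : CmbSem F L g (cAnd x ls) ↔ ∀ cm ∈ ls, CmbSem F L g cm := by
  induction ls with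
  | nil =>
    simp only [cAnd, List.foldr_nil]
    show LitSem F L g (x, .top) ↔ _
    simp [LitSem, sat]
  | cons cm ls ih =>
    show CmbSem F L g cm ∧ CmbSem F L g (cAnd x ls) ↔ _
    rw [ih]
    simp

theorem cOr_sem {F : Frame Λ} {L : List (LExp Λ)} {g : ℕ → F.W} {x : ℕ}
    {ls : List (Cmb Λ)} : CmbSem F L g (cOr x ls) ↔ ∃ cm ∈ ls, CmbSem F L g cm := by
  induction ls with
  | nil =>
    simp only [cOr, List.foldr_nil]
    show LitSem F L g (x, .bot) ↔ _
    simp [LitSem, sat]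
  | cons cm ls ih =>
    show CmbSem F L g cm ∨ CmbSem F L g (cOr x ls) ↔ _
    rw [ih]
    simp

theorem cAnd_lits {x : ℕ} {ls : List (Cmb Λ)} :
    ∀ p ∈ cmbLits (cAnd x ls), p = (x, MF.top) ∨ ∃ cm ∈ ls, p ∈ cmbLits cm := by
  induction ls with
  | nil => intro p hp; simp [cAnd, cmbLits] at hp; exact Or.inl hp
  | cons cm ls ih =>
    intro p hp
    rcases List.mem_append.1 hp with h | h
    · exact Or.inr ⟨cm, by simp, h⟩
    · rcases ih p h with h' | ⟨cm', h1, h2⟩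
      · exact Or.inl h'
      · exact Or.inr ⟨cm', by simp [h1], h2⟩

theorem cOr_lits {x : ℕ} {ls : List (Cmb Λ)} :
    ∀ p ∈ cmbLits (cOr x ls), p = (x, MF.bot) ∨ ∃ cm ∈ ls, p ∈ cmbLits cm := by
  induction ls with
  | nil => intro p hp; simp [cOr, cmbLits] at hp; exact Or.inl hp
  | cons cm ls ih =>
    intro p hp
    rcases List.mem_append.1 hp with h | h
    · exact Or.inr ⟨cm, by simp, h⟩
    · rcases ih p h with h' | ⟨cm', h1, h2⟩
      · exact Or.inl h'
      · exact Or.inr ⟨cm', by simp [h1], h2⟩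

/-! ### wrapping a quantifier around a combination -/

noncomputable def wrapEx (y : ℕ) (l : Λ) (x : ℕ) (c : Cmb Λ) : Cmb Λ :=
  cOr x ((toDNF c).map fun conj =>
    cAnd x (.lit (x, .dia l (mAnd ((conj.filter fun p => p.1 = y).map Prod.snd)))
            :: (conj.filter fun p => ¬ p.1 = y).map .lit))

noncomputable def wrapAll (y : ℕ) (l : Λ) (x : ℕ) (c : Cmb Λ) : Cmb Λ :=
  cAnd x ((toCNF c).map fun cl =>
    cOr x (.lit (x, .box l (mOr ((cl.filter fun p => p.1 = y).map Prod.snd)))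
           :: (cl.filter fun p => ¬ p.1 = y).map .lit))

def YFresh (L : List (LExp Λ)) (y : ℕ) (p : Lit Λ) : Prop :=
  ∀ q ∈ MF.vars p.2, ∀ hq : q.2 < L.length, y ∉ (L.get ⟨q.2, hq⟩).evars

theorem thetaHat_update_fresh {F : Frame Λ} {L : List (LExp Λ)} {g : ℕ → F.W} {y : ℕ}
    {u : F.W} {p : Lit Λ} (hf : YFresh L y p) :
    ∀ q ∈ MF.vars p.2, thetaHat F L (Function.update g y u) q = thetaHat F L g q := by
  intro q hq
  apply thetaHat_congr
  intro hp i hi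
  have : i ≠ y := fun h => hf q hq hp (h ▸ hi)
  exact Function.update_of_ne this _ _

theorem litsem_update_ne {F : Frame Λ} {L : List (LExp Λ)} {g : ℕ → F.W} {y : ℕ}
    {u : F.W} {p : Lit Λ} (hf : YFresh L y p) (ha : p.1 ≠ y) :
    LitSem F L (Function.update g y u) p ↔ LitSem F L g p := by
  unfold LitSem
  rw [Function.update_of_ne ha]
  exact sat_congr _ (thetaHat_update_fresh hf) _

theorem litsem_update_eq {F : Frame Λ} {L : List (LExp Λ)} {g : ℕ → F.W} {y : ℕ}
    {u : F.W} {p : Lit Λ} (hf : YFresh L y p) (ha : p.1 = y) :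
    LitSem F L (Function.update g y u) p ↔ sat F (thetaHat F L g) u p.2 := by
  unfold LitSem
  rw [ha, Function.update_self]
  exact sat_congr _ (thetaHat_update_fresh hf) _

theorem conj_split {F : Frame Λ} {L : List (LExp Λ)} {g : ℕ → F.W} {y : ℕ} {u : F.W}
    {conj : List (Lit Λ)} (hf : ∀ p ∈ conj, YFresh L y p) :
    (∀ p ∈ conj, LitSem F L (Function.update g y u) p) ↔
      ((∀ p ∈ conj, p.1 = y → sat F (thetaHat F L g) u p.2) ∧
       (∀ p ∈ conj, p.1 ≠ y → LitSem F L g p)) := by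
  constructor
  · intro h
    constructor
    · intro p hp hy
      exact (litsem_update_eq (hf p hp) hy).1 (h p hp)
    · intro p hp hy
      exact (litsem_update_ne (hf p hp) hy).1 (h p hp)
  · rintro ⟨h1, h2⟩ p hp
    by_cases hy : p.1 = y
    · exact (litsem_update_eq (hf p hp) hy).2 (h1 p hp hy)
    · exact (litsem_update_ne (hf p hp) hy).2 (h2 p hp hy)

theorem filter_forall_eq {conj : List (Lit Λ)} {y : ℕ} (P : Lit Λ → Prop) :
    (∀ p ∈ conj.filter (fun p => p.1 = y), P p) ↔ (∀ p ∈ conj, p.1 = y → P p) := by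
  constructor
  · intro h p hp hy
    exact h p (List.mem_filter.2 ⟨hp, decide_eq_true hy⟩)
  · intro h p hp
    rw [List.mem_filter] at hp
    exact h p hp.1 (of_decide_eq_true hp.2)

theorem filter_forall_ne {conj : List (Lit Λ)} {y : ℕ} (P : Lit Λ → Prop) :
    (∀ p ∈ conj.filter (fun p => ¬ p.1 = y), P p) ↔ (∀ p ∈ conj, p.1 ≠ y → P p) := by
  constructor
  · intro h p hp hy
    exact h p (List.mem_filter.2 ⟨hp, decide_eq_true hy⟩)
  · intro h p hp
    rw [List.mem_filter] at hp
    exact h p hp.1 (of_decide_eq_true hp.2)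

theorem wrapEx_sem {F : Frame Λ} {L : List (LExp Λ)} {g : ℕ → F.W} {y : ℕ} {l : Λ} {x : ℕ}
    {c : Cmb Λ} (hfresh : ∀ p ∈ cmbLits c, YFresh L y p) :
    (∃ u, F.R l (g x) u ∧ CmbSem F L (Function.update g y u) c) ↔
      CmbSem F L g (wrapEx y l x c) := by
  unfold wrapEx
  rw [cOr_sem]
  constructor
  · rintro ⟨u, hu, hc⟩
    obtain ⟨conj, hconj, hall⟩ := toDNF_sem.1 hc
    have hsp := (conj_split (g := g) (u := u)
      (fun p hp => hfresh p (toDNF_lits conj hconj p hp))).1 hall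
    refine ⟨_, List.mem_map.2 ⟨conj, hconj, rfl⟩, ?_⟩
    rw [cAnd_sem]
    intro cm hcm
    rcases List.mem_cons.1 hcm with rfl | hcm
    · show LitSem F L g _
      unfold LitSem
      show ∃ u', F.R l (g x) u' ∧ _
      refine ⟨u, hu, ?_⟩
      rw [sat_mAnd]
      intro φ hφ
      obtain ⟨p, hp, rfl⟩ := List.mem_map.1 hφ
      rw [List.mem_filter] at hp
      exact hsp.1 p hp.1 (of_decide_eq_true hp.2)
    · obtain ⟨p, hp, rfl⟩ := List.mem_map.1 hcm
      rw [List.mem_filter] at hp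
      exact hsp.2 p hp.1 (of_decide_eq_true hp.2)
  · rintro ⟨cm, hcm, hsem⟩
    obtain ⟨conj, hconj, rfl⟩ := List.mem_map.1 hcm
    rw [cAnd_sem] at hsem
    have hhead := hsem _ List.mem_cons_self
    have htail : ∀ p ∈ conj, p.1 ≠ y → LitSem F L g p := by
      intro p hp hy
      exact hsem (.lit p) (List.mem_cons_of_mem _
        (List.mem_map.2 ⟨p, List.mem_filter.2 ⟨hp, decide_eq_true hy⟩, rfl⟩))
    obtain ⟨u, hu, hmand⟩ := hhead
    rw [sat_mAnd] at hmand
    refine ⟨u, hu, ?_⟩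
    rw [toDNF_sem]
    refine ⟨conj, hconj, ?_⟩
    rw [conj_split (fun p hp => hfresh p (toDNF_lits conj hconj p hp))]
    refine ⟨?_, htail⟩
    intro p hp hy
    exact hmand _ (List.mem_map.2 ⟨p, List.mem_filter.2 ⟨hp, decide_eq_true hy⟩, rfl⟩)

theorem wrapAll_sem {F : Frame Λ} {L : List (LExp Λ)} {g : ℕ → F.W} {y : ℕ} {l : Λ} {x : ℕ}
    {c : Cmb Λ} (hfresh : ∀ p ∈ cmbLits c, YFresh L y p) :
    (∀ u, F.R l (g x) u → CmbSem F L (Function.update g y u) c) ↔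
      CmbSem F L g (wrapAll y l x c) := by
  unfold wrapAll
  rw [cAnd_sem]
  have exsplit : ∀ (cl : List (Lit Λ)), cl ∈ toCNF c → ∀ u : F.W,
      ((∃ p ∈ cl, LitSem F L (Function.update g y u) p) ↔
       ((∃ p ∈ cl, p.1 = y ∧ sat F (thetaHat F L g) u p.2) ∨
        (∃ p ∈ cl, p.1 ≠ y ∧ LitSem F L g p))) := by
    intro cl hcl u
    constructor
    · rintro ⟨p, hp, hps⟩
      by_cases hy : p.1 = y
      · exact Or.inl ⟨p, hp, hy,
          (litsem_update_eq (hfresh p (toCNF_lits cl hcl p hp)) hy).1 hps⟩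
      · exact Or.inr ⟨p, hp, hy,
          (litsem_update_ne (hfresh p (toCNF_lits cl hcl p hp)) hy).1 hps⟩
    · rintro (⟨p, hp, hy, hps⟩ | ⟨p, hp, hy, hps⟩)
      · exact ⟨p, hp, (litsem_update_eq (hfresh p (toCNF_lits cl hcl p hp)) hy).2 hps⟩
      · exact ⟨p, hp, (litsem_update_ne (hfresh p (toCNF_lits cl hcl p hp)) hy).2 hps⟩
  constructor
  · intro h cm hcm
    obtain ⟨cl, hcl, rfl⟩ := List.mem_map.1 hcm
    rw [cOr_sem]
    by_cases hrest : ∃ p ∈ cl, p.1 ≠ y ∧ LitSem F L g p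
    · obtain ⟨p, hp, hy, hps⟩ := hrest
      refine ⟨.lit p, List.mem_cons_of_mem _
        (List.mem_map.2 ⟨p, List.mem_filter.2 ⟨hp, decide_eq_true hy⟩, rfl⟩), hps⟩
    · refine ⟨_, List.mem_cons_self, ?_⟩
      show LitSem F L g _
      unfold LitSem
      show ∀ u, F.R l (g x) u → _
      intro u hu
      have := toCNF_sem.1 (h u hu) cl hcl
      rcases (exsplit cl hcl u).1 this with hyp | hyp
      · obtain ⟨p, hp, hy, hps⟩ := hyp
        rw [sat_mOr]
        exact ⟨p.2, List.mem_map.2 ⟨p, List.mem_filter.2 ⟨hp, decide_eq_true hy⟩, rfl⟩, hps⟩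
      · exact absurd hyp hrest
  · intro h u hu
    rw [toCNF_sem]
    intro cl hcl
    have := h _ (List.mem_map.2 ⟨cl, hcl, rfl⟩)
    rw [cOr_sem] at this
    obtain ⟨cm, hcm, hsem⟩ := this
    rcases List.mem_cons.1 hcm with rfl | hcm
    · have hbox : ∀ u', F.R l (g x) u' →
          sat F (thetaHat F L g) u' (mOr ((cl.filter fun p => p.1 = y).map Prod.snd)) :=
        hsem
      have := hbox u hu
      rw [sat_mOr] at this
      obtain ⟨φ, hφ, hps⟩ := this
      obtain ⟨p, hp, rfl⟩ := List.mem_map.1 hφ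
      rw [List.mem_filter] at hp
      refine (exsplit cl hcl u).2 (Or.inl ⟨p, hp.1, of_decide_eq_true hp.2, hps⟩)
    · obtain ⟨p, hp, rfl⟩ := List.mem_map.1 hcm
      rw [List.mem_filter] at hp
      exact (exsplit cl hcl u).2 (Or.inr ⟨p, hp.1, of_decide_eq_true hp.2, hsem⟩)

end P13


set_option autoImplicit false
set_option maxHeartbeats 1000000


attribute [local instance] Classical.propDecidable

namespace P13

variable {Λ : Type u}

def PLitOK (L : List (LExp Λ)) (U S : Set ℕ) (p : Lit Λ) : Prop :=
  p.1 ∈ S ∧ Positive p.2 ∧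
    ∀ q ∈ MF.vars p.2, ∃ E : LExp Λ, E ∈ L ∧ Safe E ∧ E.evars ⊆ U ∧ q = pEL L E

theorem plitok_litok {L : List (LExp Λ)} {U : Set ℕ} {p : Lit Λ} (h : PLitOK L U U p) :
    LitOK L U p := h

theorem plitok_mono {L : List (LExp Λ)} {U U' S S' : Set ℕ} {p : Lit Λ}
    (h : PLitOK L U S p) (hU : U ⊆ U') (hS : S ⊆ S') : PLitOK L U' S' p := by
  obtain ⟨h1, h2, h3⟩ := h
  refine ⟨hS h1, h2, fun q hq => ?_⟩
  obtain ⟨E, e1, e2, e3, e4⟩ := h3 q hq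
  exact ⟨E, e1, e2, e3.trans hU, e4⟩

theorem yfresh_of_plitok {L : List (LExp Λ)} {U S : Set ℕ} {y : ℕ} {p : Lit Λ}
    (h : PLitOK L U S p) (hy : y ∉ U) : YFresh L y p := by
  intro q hq hlt hin
  obtain ⟨E, e1, e2, e3, rfl⟩ := h.2.2 q hq
  have hget : L.get ⟨(pEL L E).2, hlt⟩ = E := idxL_get e1 hlt
  rw [hget] at hin
  exact hy (e3 hin)

/-! ### well-formedness of inner formulas -/

def InnerWF (L : List (LExp Λ)) (U : Set ℕ) : KrF Λ → Prop
  | .atom _ E => E ∈ L ∧ Safe E ∧ E.evars ⊆ U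
  | .and a b => InnerWF L U a ∧ InnerWF L U b
  | .or a b => InnerWF L U a ∧ InnerWF L U b
  | .ex y _ _ β => y ∉ U ∧ InnerWF L U β
  | .all y _ _ β => y ∉ U ∧ InnerWF L U β

noncomputable def innerT (L : List (LExp Λ)) : KrF Λ → Cmb Λ
  | .atom s E => .lit (s, .var (pEL L E))
  | .and a b => .and (innerT L a) (innerT L b)
  | .or a b => .or (innerT L a) (innerT L b)
  | .ex y l x β => wrapEx y l x (innerT L β)
  | .all y l x β => wrapAll y l x (innerT L β)

theorem wrapEx_lits {L : List (LExp Λ)} {U S : Set ℕ} {y : ℕ} {l : Λ} {x : ℕ} {c : Cmb Λ}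
    (hc : ∀ p ∈ cmbLits c, PLitOK L U S p) :
    ∀ p ∈ cmbLits (wrapEx y l x c), PLitOK L U (insert x (S \ {y})) p := by
  intro p hp
  rcases cOr_lits p hp with rfl | ⟨cm, hcm, hpc⟩
  · exact ⟨Set.mem_insert _ _, .bot, fun q hq => by simp [MF.vars] at hq⟩
  · obtain ⟨conj, hconj, rfl⟩ := List.mem_map.1 hcm
    rcases cAnd_lits p hpc with rfl | ⟨cm', hcm', hpc'⟩
    · exact ⟨Set.mem_insert _ _, .top, fun q hq => by simp [MF.vars] at hq⟩
    · rcases List.mem_cons.1 hcm' with rfl | hcm'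
      · rcases List.mem_singleton.1 hpc' with rfl
        refine ⟨Set.mem_insert _ _, .dia l (mAnd_pos ?_), fun q hq => ?_⟩
        · intro φ hφ
          obtain ⟨p', hp', rfl⟩ := List.mem_map.1 hφ
          rw [List.mem_filter] at hp'
          exact (hc p' (toDNF_lits conj hconj p' hp'.1)).2.1
        · show ∃ E, _
          have hq' : q ∈ MF.vars (mAnd ((conj.filter fun p => p.1 = y).map Prod.snd)) := hq
          obtain ⟨φ, hφ, hqφ⟩ := mAnd_vars hq'
          obtain ⟨p', hp', rfl⟩ := List.mem_map.1 hφ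
          rw [List.mem_filter] at hp'
          exact (hc p' (toDNF_lits conj hconj p' hp'.1)).2.2 q hqφ
      · obtain ⟨p', hp', rfl⟩ := List.mem_map.1 hcm'
        have hpeq : p = p' := List.mem_singleton.1 hpc'
        rw [hpeq]
        rw [List.mem_filter] at hp'
        have h0 := hc p' (toDNF_lits conj hconj p' hp'.1)
        refine ⟨?_, h0.2.1, h0.2.2⟩
        have hne : p'.1 ≠ y := of_decide_eq_true hp'.2
        exact Set.mem_insert_iff.2 (Or.inr ⟨h0.1, hne⟩)

theorem wrapAll_lits {L : List (LExp Λ)} {U S : Set ℕ} {y : ℕ} {l : Λ} {x : ℕ} {c : Cmb Λ}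
    (hc : ∀ p ∈ cmbLits c, PLitOK L U S p) :
    ∀ p ∈ cmbLits (wrapAll y l x c), PLitOK L U (insert x (S \ {y})) p := by
  intro p hp
  rcases cAnd_lits p hp with rfl | ⟨cm, hcm, hpc⟩
  · exact ⟨Set.mem_insert _ _, .top, fun q hq => by simp [MF.vars] at hq⟩
  · obtain ⟨cl, hcl, rfl⟩ := List.mem_map.1 hcm
    rcases cOr_lits p hpc with rfl | ⟨cm', hcm', hpc'⟩
    · exact ⟨Set.mem_insert _ _, .bot, fun q hq => by simp [MF.vars] at hq⟩
    · rcases List.mem_cons.1 hcm' with rfl | hcm'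
      · rcases List.mem_singleton.1 hpc' with rfl
        refine ⟨Set.mem_insert _ _, .box l (mOr_pos ?_), fun q hq => ?_⟩
        · intro φ hφ
          obtain ⟨p', hp', rfl⟩ := List.mem_map.1 hφ
          rw [List.mem_filter] at hp'
          exact (hc p' (toCNF_lits cl hcl p' hp'.1)).2.1
        · show ∃ E, _
          have hq' : q ∈ MF.vars (mOr ((cl.filter fun p => p.1 = y).map Prod.snd)) := hq
          obtain ⟨φ, hφ, hqφ⟩ := mOr_vars hq'
          obtain ⟨p', hp', rfl⟩ := List.mem_map.1 hφ
          rw [List.mem_filter] at hp'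
          exact (hc p' (toCNF_lits cl hcl p' hp'.1)).2.2 q hqφ
      · obtain ⟨p', hp', rfl⟩ := List.mem_map.1 hcm'
        have hpeq : p = p' := List.mem_singleton.1 hpc'
        rw [hpeq]
        rw [List.mem_filter] at hp'
        have h0 := hc p' (toCNF_lits cl hcl p' hp'.1)
        refine ⟨?_, h0.2.1, h0.2.2⟩
        have hne : p'.1 ≠ y := of_decide_eq_true hp'.2
        exact Set.mem_insert_iff.2 (Or.inr ⟨h0.1, hne⟩)

theorem innerT_lits {L : List (LExp Λ)} :
    ∀ (β : KrF Λ) (U : Set ℕ), InnerWF L U β →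
      ∀ p ∈ cmbLits (innerT L β), PLitOK L U (KrF.fv β) p := by
  intro β
  induction β with
  | atom s E =>
    intro U hwf p hp
    rcases List.mem_singleton.1 hp with rfl
    refine ⟨?_, .var _, fun q hq => ?_⟩
    · show s ∈ KrF.fv (.atom s E)
      simp [KrF.fv]
    · rcases hq with rfl
      exact ⟨E, hwf.1, hwf.2.1, hwf.2.2, rfl⟩
  | and a b iha ihb =>
    intro U hwf p hp
    rcases List.mem_append.1 hp with h | h
    · exact plitok_mono (iha U hwf.1 p h) subset_rfl (by simp [KrF.fv, Set.subset_union_left])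
    · exact plitok_mono (ihb U hwf.2 p h) subset_rfl (by simp [KrF.fv, Set.subset_union_right])
  | or a b iha ihb =>
    intro U hwf p hp
    rcases List.mem_append.1 hp with h | h
    · exact plitok_mono (iha U hwf.1 p h) subset_rfl (by simp [KrF.fv, Set.subset_union_left])
    · exact plitok_mono (ihb U hwf.2 p h) subset_rfl (by simp [KrF.fv, Set.subset_union_right])
  | ex y l x β ih =>
    intro U hwf p hp
    exact wrapEx_lits (fun p' hp' => ih U hwf.2 p' hp') p hp
  | all y l x β ih =>
    intro U hwf p hp
    exact wrapAll_lits (fun p' hp' => ih U hwf.2 p' hp') p hp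

theorem innerT_correct {F : Frame Λ} {L : List (LExp Λ)} (hnd : L.Nodup) :
    ∀ (β : KrF Λ) (U : Set ℕ), InnerWF L U β →
      ∀ g : ℕ → F.W, CmbSem F L g (innerT L β) ↔ KrF.holds F g β := by
  intro β
  induction β with
  | atom s E =>
    intro U hwf g
    show LitSem F L g (s, .var (pEL L E)) ↔ g s ∈ E.den F g
    unfold LitSem
    show g s ∈ thetaHat F L g (pEL L E) ↔ _
    rw [thetaHat_pEL hnd hwf.1]
  | and a b iha ihb =>
    intro U hwf g
    show CmbSem F L g _ ∧ CmbSem F L g _ ↔ _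
    rw [iha U hwf.1 g, ihb U hwf.2 g]
    rfl
  | or a b iha ihb =>
    intro U hwf g
    show CmbSem F L g _ ∨ CmbSem F L g _ ↔ _
    rw [iha U hwf.1 g, ihb U hwf.2 g]
    rfl
  | ex y l x β ih =>
    intro U hwf g
    have hfresh : ∀ p ∈ cmbLits (innerT L β), YFresh L y p := fun p hp =>
      yfresh_of_plitok (innerT_lits β U hwf.2 p hp) hwf.1
    rw [show CmbSem F L g (innerT L (.ex y l x β)) = CmbSem F L g (wrapEx y l x (innerT L β)) from rfl]
    rw [← wrapEx_sem hfresh]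
    show _ ↔ ∃ u, F.R l (g x) u ∧ KrF.holds F (Function.update g y u) β
    exact exists_congr fun u => and_congr_right fun _ => ih U hwf.2 _
  | all y l x β ih =>
    intro U hwf g
    have hfresh : ∀ p ∈ cmbLits (innerT L β), YFresh L y p := fun p hp =>
      yfresh_of_plitok (innerT_lits β U hwf.2 p hp) hwf.1
    rw [show CmbSem F L g (innerT L (.all y l x β)) = CmbSem F L g (wrapAll y l x (innerT L β)) from rfl]
    rw [← wrapAll_sem hfresh]
    show _ ↔ ∀ u, F.R l (g x) u → KrF.holds F (Function.update g y u) β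
    exact forall_congr' fun u => imp_congr_right fun _ => ih U hwf.2 _

end P13


set_option autoImplicit false
set_option maxHeartbeats 1000000


attribute [local instance] Classical.propDecidable

namespace P13

variable {Λ : Type u}

theorem edgeswf_append : ∀ (es1 es2 : List (Edge Λ)) (U : Set ℕ), EdgesWF U es1 →
    EdgesWF U es2 → (∀ y ∈ ysOf es1, y ∉ ysOf es2) → EdgesWF U (es1 ++ es2) := by
  intro es1
  induction es1 with
  | nil => intro es2 U _ h2 _; exact h2
  | cons e es1 ih =>
    obtain ⟨y, l, x⟩ := e
    intro es2 U h1 h2 hd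
    obtain ⟨ha, hb, hc⟩ := h1
    refine ⟨ha, hb, ?_⟩
    refine ih es2 (insert y U) hc ?_ ?_
    · refine edgeswf_mono h2 (Set.subset_insert _ _) ?_
      intro z hz ⟨hz1, hz2⟩
      rcases hz1 with rfl | hz1
      · exact hd z (by simp [ysOf]) hz
      · exact hz2 hz1
    · intro z hz
      exact hd z (by simp [ysOf]; right; simpa [ysOf] using hz)

theorem ysOf_append (es1 es2 : List (Edge Λ)) : ysOf (es1 ++ es2) = ysOf es1 ++ ysOf es2 :=
  List.map_append

/-! ### well-formedness of outer formulas -/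

def OuterWF (L : List (LExp Λ)) : Set ℕ → KrF Λ → Prop
  | U, .atom s E => s ∈ U ∧ E ∈ L ∧ Safe E ∧ E.evars ⊆ U
  | U, .and a b => OuterWF L U a ∧ OuterWF L U b
  | U, .or a b => OuterWF L U a ∧ OuterWF L U b ∧ ∀ v ∈ KrF.bv a, v ∉ KrF.bv b
  | U, .all y _ x β => x ∈ U ∧ y ∉ U ∧ y ∉ KrF.bv β ∧ OuterWF L (insert y U) β
  | U, .ex y _ _ β => y ∉ U ∧ InnerWF L U β

noncomputable def outerT (L : List (LExp Λ)) : KrF Λ → List (List (Edge Λ) × List (Lit Λ))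
  | .atom s E => [([], [(s, .var (pEL L E))])]
  | .and a b => outerT L a ++ outerT L b
  | .or a b => (outerT L a).flatMap fun C => (outerT L b).map fun D => (C.1 ++ D.1, C.2 ++ D.2)
  | .all y l x β => (outerT L β).map fun C => ((y, l, x) :: C.1, C.2)
  | .ex y l x β => (toCNF (wrapEx y l x (innerT L β))).map fun cl => ([], cl)

theorem outerT_wf {L : List (LExp Λ)} :
    ∀ (β : KrF Λ) (U : Set ℕ), OuterWF L U β → KrF.fv β ⊆ U →
      (∀ v ∈ U, v ∉ KrF.bv β) →
      ∀ C ∈ outerT L β,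
        EdgesWF U C.1 ∧ (∀ z ∈ ysOf C.1, z ∈ KrF.bv β) ∧
          ∀ p ∈ C.2, PLitOK L (U ∪ {v | v ∈ ysOf C.1}) (U ∪ {v | v ∈ ysOf C.1}) p := by
  intro β
  induction β with
  | atom s E =>
    intro U hwf _ _ C hC
    rcases List.mem_singleton.1 hC with rfl
    refine ⟨trivial, by simp [ysOf], ?_⟩
    intro p hp
    rcases List.mem_singleton.1 hp with rfl
    refine plitok_mono (U := U) (S := U) ?_ Set.subset_union_left Set.subset_union_left
    exact ⟨hwf.1, .var _, fun q hq => by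
      rcases hq with rfl
      exact ⟨E, hwf.2.1, hwf.2.2.1, hwf.2.2.2, rfl⟩⟩
  | and a b iha ihb =>
    intro U hwf hfv hbv C hC
    rcases List.mem_append.1 hC with h | h
    · obtain ⟨h1, h2, h3⟩ := iha U hwf.1 (fun v hv => hfv (by simp [KrF.fv]; exact Or.inl hv))
        (fun v hv hb => hbv v hv (by simp [KrF.bv]; exact Or.inl hb)) C h
      exact ⟨h1, fun z hz => by simp [KrF.bv]; exact Or.inl (h2 z hz), h3⟩
    · obtain ⟨h1, h2, h3⟩ := ihb U hwf.2 (fun v hv => hfv (by simp [KrF.fv]; exact Or.inr hv))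
        (fun v hv hb => hbv v hv (by simp [KrF.bv]; exact Or.inr hb)) C h
      exact ⟨h1, fun z hz => by simp [KrF.bv]; exact Or.inr (h2 z hz), h3⟩
  | or a b iha ihb =>
    intro U hwf hfv hbv C hC
    simp only [outerT, List.mem_flatMap, List.mem_map] at hC
    obtain ⟨C1, hC1, C2, hC2, rfl⟩ := hC
    obtain ⟨a1, a2, a3⟩ := iha U hwf.1 (fun v hv => hfv (by simp [KrF.fv]; exact Or.inl hv))
      (fun v hv hb => hbv v hv (by simp [KrF.bv]; exact Or.inl hb)) C1 hC1
    obtain ⟨b1, b2, b3⟩ := ihb U hwf.2.1 (fun v hv => hfv (by simp [KrF.fv]; exact Or.inr hv))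
      (fun v hv hb => hbv v hv (by simp [KrF.bv]; exact Or.inr hb)) C2 hC2
    have hys : {v | v ∈ ysOf (C1.1 ++ C2.1)} =
        {v | v ∈ ysOf C1.1} ∪ {v | v ∈ ysOf C2.1} := by
      ext z
      simp [ysOf_append]
    refine ⟨?_, ?_, ?_⟩
    · refine edgeswf_append _ _ U a1 b1 ?_
      intro z hz hz2
      exact hwf.2.2 z (a2 z hz) (b2 z hz2)
    · intro z hz
      rw [ysOf_append] at hz
      rcases List.mem_append.1 hz with h | h
      · simp [KrF.bv]; exact Or.inl (a2 z h)
      · simp [KrF.bv]; exact Or.inr (b2 z h)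
    · intro p hp
      rw [hys]
      have hsubL : (U ∪ {v | v ∈ ysOf C1.1}) ⊆
          U ∪ ({v | v ∈ ysOf C1.1} ∪ {v | v ∈ ysOf C2.1}) := by
        intro z hz
        rcases hz with hz | hz
        · exact Or.inl hz
        · exact Or.inr (Or.inl hz)
      have hsubR : (U ∪ {v | v ∈ ysOf C2.1}) ⊆
          U ∪ ({v | v ∈ ysOf C1.1} ∪ {v | v ∈ ysOf C2.1}) := by
        intro z hz
        rcases hz with hz | hz
        · exact Or.inl hz
        · exact Or.inr (Or.inr hz)
      rcases List.mem_append.1 hp with h | h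
      · exact plitok_mono (a3 p h) hsubL hsubL
      · exact plitok_mono (b3 p h) hsubR hsubR
  | all y l x β ih =>
    intro U hwf hfv hbv C hC
    simp only [outerT, List.mem_map] at hC
    obtain ⟨C', hC', rfl⟩ := hC
    obtain ⟨hx, hy, hyb, hwf'⟩ := hwf
    have hfv' : KrF.fv β ⊆ insert y U := by
      intro v hv
      by_cases hvy : v = y
      · exact hvy ▸ Set.mem_insert _ _
      · refine Set.mem_insert_iff.2 (Or.inr (hfv ?_))
        show v ∈ KrF.fv (.all y l x β)
        simp only [KrF.fv]
        exact Set.mem_insert_iff.2 (Or.inr ⟨hv, hvy⟩)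
    have hbv' : ∀ v ∈ insert y U, v ∉ KrF.bv β := by
      intro v hv
      rcases hv with rfl | hv
      · exact hyb
      · intro hb
        exact hbv v hv (by simp only [KrF.bv]; exact Set.mem_insert_iff.2 (Or.inr hb))
    obtain ⟨h1, h2, h3⟩ := ih (insert y U) hwf' hfv' hbv' C' hC'
    have hUeq : U ∪ {v | v ∈ ysOf ((y, l, x) :: C'.1)} =
        insert y U ∪ {v | v ∈ ysOf C'.1} := by
      ext z
      simp only [ysOf, List.map_cons, List.mem_cons, Set.mem_union, Set.mem_setOf_eq,
        Set.mem_insert_iff]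
      tauto
    refine ⟨⟨hx, hy, h1⟩, ?_, ?_⟩
    · intro z hz
      simp only [ysOf, List.map_cons, List.mem_cons] at hz
      simp only [KrF.bv]
      rcases hz with rfl | hz
      · exact Set.mem_insert _ _
      · exact Set.mem_insert_iff.2 (Or.inr (h2 z (by simpa [ysOf] using hz)))
    · intro p hp
      rw [hUeq]
      exact h3 p hp
  | ex y l x β ih =>
    intro U hwf hfv hbv C hC
    simp only [outerT, List.mem_map] at hC
    obtain ⟨cl, hcl, rfl⟩ := hC
    refine ⟨trivial, by simp [ysOf], ?_⟩
    intro p hp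
    have h0 : PLitOK L U (insert x (KrF.fv β \ {y})) p :=
      wrapEx_lits (innerT_lits β U hwf.2) p (toCNF_lits cl hcl p hp)
    refine plitok_mono h0 Set.subset_union_left ?_
    refine Set.Subset.trans ?_ Set.subset_union_left
    intro z hz
    refine hfv ?_
    show z ∈ KrF.fv (.ex y l x β)
    simpa [KrF.fv] using hz

theorem or_forall_mem {α' : Type v} {β' : Type w} {A : List α'} {B : List β'}
    {P : α' → Prop} {Q : β' → Prop} :
    ((∀ a ∈ A, P a) ∨ (∀ b ∈ B, Q b)) ↔ (∀ a ∈ A, ∀ b ∈ B, P a ∨ Q b) := by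
  constructor
  · rintro (h | h) a ha b hb
    · exact Or.inl (h a ha)
    · exact Or.inr (h b hb)
  · intro h
    by_cases hA : ∀ a ∈ A, P a
    · exact Or.inl hA
    · push_neg at hA
      obtain ⟨a0, ha0, hna⟩ := hA
      refine Or.inr fun b hb => ?_
      rcases h a0 ha0 b hb with h' | h'
      · exact absurd h' hna
      · exact h'

theorem outerT_correct {F : Frame Λ} {L : List (LExp Λ)} (hnd : L.Nodup) :
    ∀ (β : KrF Λ) (U : Set ℕ), OuterWF L U β → KrF.fv β ⊆ U →
      (∀ v ∈ U, v ∉ KrF.bv β) →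
      ∀ g : ℕ → F.W, KrF.holds F g β ↔ ∀ C ∈ outerT L β, ClSem F L C.1 C.2 g := by
  intro β
  induction β with
  | atom s E =>
    intro U hwf _ _ g
    show g s ∈ E.den F g ↔ _
    constructor
    · intro h C hC
      rcases List.mem_singleton.1 hC with rfl
      show LitsSem F L _ g
      refine ⟨(s, .var (pEL L E)), by simp, ?_⟩
      show g s ∈ thetaHat F L g (pEL L E)
      rwa [thetaHat_pEL hnd hwf.2.1]
    · intro h
      have := h ([], [(s, MF.var (pEL L E))]) (List.mem_singleton.2 rfl)
      obtain ⟨p, hp, hps⟩ := this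
      rcases List.mem_singleton.1 hp with rfl
      have : g s ∈ thetaHat F L g (pEL L E) := hps
      rwa [thetaHat_pEL hnd hwf.2.1] at this
  | and a b iha ihb =>
    intro U hwf hfv hbv g
    show KrF.holds F g a ∧ KrF.holds F g b ↔ _
    rw [iha U hwf.1 (fun v hv => hfv (by simp [KrF.fv]; exact Or.inl hv))
      (fun v hv hb => hbv v hv (by simp [KrF.bv]; exact Or.inl hb)) g,
      ihb U hwf.2 (fun v hv => hfv (by simp [KrF.fv]; exact Or.inr hv))
      (fun v hv hb => hbv v hv (by simp [KrF.bv]; exact Or.inr hb)) g]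
    constructor
    · rintro ⟨h1, h2⟩ C hC
      rcases List.mem_append.1 hC with h | h
      · exact h1 C h
      · exact h2 C h
    · intro h
      exact ⟨fun C hC => h C (List.mem_append.2 (Or.inl hC)),
        fun C hC => h C (List.mem_append.2 (Or.inr hC))⟩
  | or a b iha ihb =>
    intro U hwf hfv hbv g
    have hfa := fun v (hv : v ∈ KrF.fv a) => hfv (by simp [KrF.fv]; exact Or.inl hv)
    have hfb := fun v (hv : v ∈ KrF.fv b) => hfv (by simp [KrF.fv]; exact Or.inr hv)
    have hba := fun v hv (hb : v ∈ KrF.bv a) => hbv v hv (by simp [KrF.bv]; exact Or.inl hb)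
    have hbb := fun v hv (hb : v ∈ KrF.bv b) => hbv v hv (by simp [KrF.bv]; exact Or.inr hb)
    show KrF.holds F g a ∨ KrF.holds F g b ↔ _
    rw [iha U hwf.1 hfa hba g, ihb U hwf.2.1 hfb hbb g]
    rw [or_forall_mem]
    constructor
    · intro h X hX
      simp only [outerT, List.mem_flatMap, List.mem_map] at hX
      obtain ⟨C, hC, D, hD, rfl⟩ := hX
      obtain ⟨a1, a2, a3⟩ := outerT_wf a U hwf.1 hfa hba C hC
      obtain ⟨b1, b2, b3⟩ := outerT_wf b U hwf.2.1 hfb hbb D hD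
      refine (clsem_merge a1 b1 a3 b3 ?_ g).2 (h C hC D hD)
      intro z hz hz2
      exact hwf.2.2 z (a2 z hz) (b2 z hz2)
    · intro h C hC D hD
      obtain ⟨a1, a2, a3⟩ := outerT_wf a U hwf.1 hfa hba C hC
      obtain ⟨b1, b2, b3⟩ := outerT_wf b U hwf.2.1 hfb hbb D hD
      refine (clsem_merge a1 b1 a3 b3 ?_ g).1 ?_
      · intro z hz hz2
        exact hwf.2.2 z (a2 z hz) (b2 z hz2)
      · refine h (C.1 ++ D.1, C.2 ++ D.2) ?_
        simp only [outerT, List.mem_flatMap, List.mem_map]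
        exact ⟨C, hC, D, hD, rfl⟩
  | all y l x β ih =>
    intro U hwf hfv hbv g
    obtain ⟨hx, hy, hyb, hwf'⟩ := hwf
    have hfv' : KrF.fv β ⊆ insert y U := by
      intro v hv
      by_cases hvy : v = y
      · exact hvy ▸ Set.mem_insert _ _
      · refine Set.mem_insert_iff.2 (Or.inr (hfv ?_))
        show v ∈ KrF.fv (.all y l x β)
        simp only [KrF.fv]
        exact Set.mem_insert_iff.2 (Or.inr ⟨hv, hvy⟩)
    have hbv' : ∀ v ∈ insert y U, v ∉ KrF.bv β := by
      intro v hv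
      rcases hv with rfl | hv
      · exact hyb
      · intro hb
        exact hbv v hv (by simp only [KrF.bv]; exact Set.mem_insert_iff.2 (Or.inr hb))
    show (∀ u, F.R l (g x) u → KrF.holds F (Function.update g y u) β) ↔ _
    constructor
    · intro h C hC
      simp only [outerT, List.mem_map] at hC
      obtain ⟨C', hC', rfl⟩ := hC
      intro u hu
      exact (ih (insert y U) hwf' hfv' hbv' (Function.update g y u)).1 (h u hu) C' hC'
    · intro h u hu
      rw [ih (insert y U) hwf' hfv' hbv' (Function.update g y u)]
      intro C' hC'
      exact h ((y, l, x) :: C'.1, C'.2) (by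
        simp only [outerT, List.mem_map]; exact ⟨C', hC', rfl⟩) u hu
  | ex y l x β ih =>
    intro U hwf hfv hbv g
    have hfresh : ∀ p ∈ cmbLits (innerT L β), YFresh L y p := fun p hp =>
      yfresh_of_plitok (innerT_lits β U hwf.2 p hp) hwf.1
    have h1 : (∃ u, F.R l (g x) u ∧ KrF.holds F (Function.update g y u) β) ↔
        CmbSem F L g (wrapEx y l x (innerT L β)) := by
      rw [← wrapEx_sem hfresh]
      exact exists_congr fun u => and_congr_right fun _ =>
        (innerT_correct hnd β U hwf.2 _).symm
    show (∃ u, F.R l (g x) u ∧ KrF.holds F (Function.update g y u) β) ↔ _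
    rw [h1, toCNF_sem]
    constructor
    · intro h C hC
      simp only [outerT, List.mem_map] at hC
      obtain ⟨cl, hcl, rfl⟩ := hC
      exact h cl hcl
    · intro h cl hcl
      exact h ([], cl) (by simp only [outerT, List.mem_map]; exact ⟨cl, hcl, rfl⟩)

end P13


set_option autoImplicit false
set_option maxHeartbeats 1000000


attribute [local instance] Classical.propDecidable

namespace P13

variable {Λ : Type u}

def atomExprsK : KrF Λ → List (LExp Λ)
  | .atom _ E => [E]
  | .and a b => atomExprsK a ++ atomExprsK b
  | .or a b => atomExprsK a ++ atomExprsK b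
  | .all _ _ _ β => atomExprsK β
  | .ex _ _ _ β => atomExprsK β

noncomputable def Lof (α : KrF Λ) : List (LExp Λ) :=
  ((atomExprsK α).flatMap subL).dedup

theorem Lof_nodup (α : KrF Λ) : (Lof α).Nodup := List.nodup_dedup _

theorem Lof_subclosed (α : KrF Λ) : SubClosed (Lof α) := by
  intro E hE e he
  rw [Lof, List.mem_dedup] at hE ⊢
  obtain ⟨E₀, h1, h2⟩ := List.mem_flatMap.1 hE
  exact List.mem_flatMap.2 ⟨E₀, h1, mem_subL_iff.2 (subexp_trans he (mem_subL_iff.1 h2))⟩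

theorem Lof_atoms (α : KrF Λ) : ∀ E ∈ atomExprsK α, E ∈ Lof α := by
  intro E hE
  rw [Lof, List.mem_dedup]
  exact List.mem_flatMap.2 ⟨E, hE, mem_subL_iff.2 (.refl _)⟩

/-! ### bridging the original hypotheses to the well-formedness predicates -/

theorem bridge_inner {L : List (LExp Λ)} :
    ∀ (β : KrF Λ) (U : Set ℕ), KrF.AtomsAll Safe β → KrF.GKok U true β →
      (∀ v ∈ U, v ∉ KrF.bv β) → (∀ E ∈ atomExprsK β, E ∈ L) → InnerWF L U β := by
  intro β
  induction β with
  | atom s E =>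
    intro U hs hg _ hm
    exact ⟨hm E (by simp [atomExprsK]), hs, hg⟩
  | and a b iha ihb =>
    intro U hs hg hbv hm
    refine ⟨iha U hs.1 hg.1 ?_ ?_, ihb U hs.2 hg.2 ?_ ?_⟩
    · intro v hv hb; exact hbv v hv (by simp [KrF.bv]; exact Or.inl hb)
    · intro E hE; exact hm E (List.mem_append.2 (Or.inl hE))
    · intro v hv hb; exact hbv v hv (by simp [KrF.bv]; exact Or.inr hb)
    · intro E hE; exact hm E (List.mem_append.2 (Or.inr hE))
  | or a b iha ihb =>
    intro U hs hg hbv hm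
    refine ⟨iha U hs.1 hg.1 ?_ ?_, ihb U hs.2 hg.2 ?_ ?_⟩
    · intro v hv hb; exact hbv v hv (by simp [KrF.bv]; exact Or.inl hb)
    · intro E hE; exact hm E (List.mem_append.2 (Or.inl hE))
    · intro v hv hb; exact hbv v hv (by simp [KrF.bv]; exact Or.inr hb)
    · intro E hE; exact hm E (List.mem_append.2 (Or.inr hE))
  | ex y l x β ih =>
    intro U hs hg hbv hm
    refine ⟨fun hyU => hbv y hyU (by simp [KrF.bv]), ?_⟩
    refine ih U hs hg ?_ hm
    intro v hv hb
    exact hbv v hv (by simp only [KrF.bv]; exact Set.mem_insert_iff.2 (Or.inr hb))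
  | all y l x β ih =>
    intro U hs hg hbv hm
    refine ⟨fun hyU => hbv y hyU (by simp [KrF.bv]), ?_⟩
    refine ih U hs hg ?_ hm
    intro v hv hb
    exact hbv v hv (by simp only [KrF.bv]; exact Set.mem_insert_iff.2 (Or.inr hb))

theorem bridge_outer {L : List (LExp Λ)} :
    ∀ (β : KrF Λ) (U : Set ℕ), KrF.AtomsAll Safe β → KrF.GKok U false β →
      KrF.CleanBound β → (∀ v ∈ U, v ∉ KrF.bv β) → KrF.fv β ⊆ U →
      (∀ E ∈ atomExprsK β, E ∈ L) → OuterWF L U β := by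
  intro β
  induction β with
  | atom s E =>
    intro U hs hg _ _ hfv hm
    exact ⟨hfv (by simp [KrF.fv]), hm E (by simp [atomExprsK]), hs, hg⟩
  | and a b iha ihb =>
    intro U hs hg hcb hbv hfv hm
    refine ⟨iha U hs.1 hg.1 hcb.1 ?_ ?_ ?_, ihb U hs.2 hg.2 hcb.2.1 ?_ ?_ ?_⟩
    · intro v hv hb; exact hbv v hv (by simp [KrF.bv]; exact Or.inl hb)
    · intro v hv; exact hfv (by simp [KrF.fv]; exact Or.inl hv)
    · intro E hE; exact hm E (List.mem_append.2 (Or.inl hE))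
    · intro v hv hb; exact hbv v hv (by simp [KrF.bv]; exact Or.inr hb)
    · intro v hv; exact hfv (by simp [KrF.fv]; exact Or.inr hv)
    · intro E hE; exact hm E (List.mem_append.2 (Or.inr hE))
  | or a b iha ihb =>
    intro U hs hg hcb hbv hfv hm
    refine ⟨iha U hs.1 hg.1 hcb.1 ?_ ?_ ?_, ihb U hs.2 hg.2 hcb.2.1 ?_ ?_ ?_, ?_⟩
    · intro v hv hb; exact hbv v hv (by simp [KrF.bv]; exact Or.inl hb)
    · intro v hv; exact hfv (by simp [KrF.fv]; exact Or.inl hv)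
    · intro E hE; exact hm E (List.mem_append.2 (Or.inl hE))
    · intro v hv hb; exact hbv v hv (by simp [KrF.bv]; exact Or.inr hb)
    · intro v hv; exact hfv (by simp [KrF.fv]; exact Or.inr hv)
    · intro E hE; exact hm E (List.mem_append.2 (Or.inr hE))
    · intro v hva hvb
      have : v ∈ KrF.bv a ∩ KrF.bv b := ⟨hva, hvb⟩
      rw [hcb.2.2] at this
      exact this
  | all y l x β ih =>
    intro U hs hg hcb hbv hfv hm
    have hyU : y ∉ U := fun hyU => hbv y hyU (by simp [KrF.bv])
    have hyb : y ∉ KrF.bv β := hcb.2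
    refine ⟨hfv (by simp [KrF.fv]), hyU, hyb, ?_⟩
    refine ih (insert y U) hs hg hcb.1 ?_ ?_ hm
    · intro v hv
      rcases hv with rfl | hv
      · exact hyb
      · intro hb
        exact hbv v hv (by simp only [KrF.bv]; exact Set.mem_insert_iff.2 (Or.inr hb))
    · intro v hv
      by_cases hvy : v = y
      · exact hvy ▸ Set.mem_insert _ _
      · refine Set.mem_insert_iff.2 (Or.inr (hfv ?_))
        show v ∈ KrF.fv (.all y l x β)
        simp only [KrF.fv]
        exact Set.mem_insert_iff.2 (Or.inr ⟨hv, hvy⟩)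
  | ex y l x β ih =>
    intro U hs hg hcb hbv hfv hm
    refine ⟨fun hyU => hbv y hyU (by simp [KrF.bv]), ?_⟩
    refine bridge_inner β U hs hg ?_ hm
    intro v hv hb
    exact hbv v hv (by simp only [KrF.bv]; exact Set.mem_insert_iff.2 (Or.inr hb))

/-! ### assembling the conjunction of clause formulas -/

theorem conj_assemble (L : List (LExp Λ)) (hnd : L.Nodup) (hcl : SubClosed L) (x₀ : ℕ) :
    ∀ cls : List (List (Edge Λ) × List (Lit Λ)),
      (∀ C ∈ cls, EdgesWF {x₀} C.1 ∧
        ∀ p ∈ C.2, LitOK L ({x₀} ∪ {v | v ∈ ysOf C.1}) p) →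
      ∃ φ : MF Λ (ℕ × ℕ), GSF φ ∧ ∀ (F : Frame Λ) (w : F.W),
        (∀ θ : ℕ × ℕ → Set F.W, sat F θ w φ) ↔
          ∀ C ∈ cls, ∀ g : ℕ → F.W, g x₀ = w → ClSem F L C.1 C.2 g := by
  intro cls
  induction cls with
  | nil =>
    intro _
    refine ⟨.imp (.neg .top) .bot, .impl (.neg .top), ?_⟩
    intro F w
    constructor
    · intro _ C hC; cases hC
    · intro _ θ
      intro hn
      exact absurd trivial hn
  | cons C cls ih =>
    intro h
    obtain ⟨A, hA, hsem⟩ := clauseGS L hnd hcl C.1 C.2 x₀ (h C (by simp)).1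
      (fun p hp => (h C (by simp)).2 p hp)
    obtain ⟨φr, hr, hrsem⟩ := ih (fun C' hC' => h C' (List.mem_cons_of_mem _ hC'))
    refine ⟨.and (.imp A .bot) φr, .and (.impl hA) hr, ?_⟩
    intro F w
    constructor
    · intro hθ C' hC'
      rcases List.mem_cons.1 hC' with rfl | hC'
      · exact (hsem F w).1 (fun θ => (hθ θ).1)
      · exact (hrsem F w).1 (fun θ => (hθ θ).2) C' hC'
    · intro h' θ
      constructor
      · exact (hsem F w).2 (h' C (by simp)) θ
      · exact (hrsem F w).2 (fun C' hC' => h' C' (List.mem_cons_of_mem _ hC')) θ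

/-- full form. -/
theorem statement13' (α : KrF Λ) (x₀ : ℕ) (hα : IsGenKracht α x₀) :
    ∃ φ : MF Λ (ℕ × ℕ), GSF φ ∧
      ∀ (F : Frame Λ) (w : F.W),
        (∀ θ : ℕ × ℕ → Set F.W, sat F θ w φ) ↔
          ∀ g : ℕ → F.W, g x₀ = w → KrF.holds F g α := by
  obtain ⟨⟨hclean, hsafe, hgk⟩, hfv⟩ := hα
  set L := Lof α with hL
  have hnd := Lof_nodup α
  have hcl := Lof_subclosed α
  have hmem := Lof_atoms α
  have hbv0 : ∀ v ∈ ({x₀} : Set ℕ), v ∉ KrF.bv α := by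
    intro v hv hb
    rcases hv with rfl
    have : v ∈ KrF.fv α ∩ KrF.bv α := ⟨by rw [hfv]; rfl, hb⟩
    rw [hclean.1] at this
    exact this
  have hfv0 : KrF.fv α ⊆ {x₀} := by rw [hfv]
  have hgk' : KrF.GKok {x₀} false α := by rwa [hfv] at hgk
  have hwf : OuterWF L {x₀} α :=
    bridge_outer α {x₀} hsafe hgk' hclean.2 hbv0 hfv0 hmem
  have hcls : ∀ C ∈ outerT L α, EdgesWF ({x₀} : Set ℕ) C.1 ∧
      ∀ p ∈ C.2, LitOK L ({x₀} ∪ {v | v ∈ ysOf C.1}) p := by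
    intro C hC
    obtain ⟨h1, _, h3⟩ := outerT_wf α {x₀} hwf hfv0 hbv0 C hC
    exact ⟨h1, fun p hp => plitok_litok (h3 p hp)⟩
  obtain ⟨φ, hφ, hφsem⟩ := conj_assemble L hnd hcl x₀ (outerT L α) hcls
  refine ⟨φ, hφ, ?_⟩
  intro F w
  rw [hφsem F w]
  constructor
  · intro h g hg
    rw [outerT_correct hnd α {x₀} hwf hfv0 hbv0 g]
    intro C hC
    exact h C hC g hg
  · intro h C hC g hg
    exact (outerT_correct hnd α {x₀} hwf hfv0 hbv0 g).1 (h g hg) C hC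

end P13


/-- every generalized Kracht formula `α(x₀)` (read via the `#`-translation of
its atoms) is the local first-order correspondent of some generalized Sahlqvist formula. -/
theorem statement13 {Λ : Type u} (α : KrF Λ) (x₀ : ℕ) (hα : IsGenKracht α x₀) :
    ∃ φ : MF Λ (ℕ × ℕ), GSF φ ∧
      ∀ (F : Frame Λ) (w : F.W),
        (∀ θ : ℕ × ℕ → Set F.W, sat F θ w φ) ↔
          ∀ g : ℕ → F.W, g x₀ = w → KrF.holds F g α := by
  exact P13.statement13' α x₀ hα
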